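/- arXiv:1811.00582 — 7 statements merged into one kernel-verified Lean document; each statement's English description precedes it below -/
import Mathlib

section
/- Let 1<α<2 and α−1<β<1, and let f:(0,1)→ℝ be measurable with ‖f‖_{ω^{(β,α−β)}} < ∞. Then ∫₀¹ ω^{(β−1,α−β−1)}(x)·(∫₀^x f(s)ds)² dx ≤ B(α−β,β)·B(1−(α−β),1−β)·‖f‖²_{ω^{(β,α−β)}}, where B(a,b) := Γ(a)Γ(b)/Γ(a+b) is the Beta function. -/
open MeasureTheory Real Filter

/-- The weight function ω^{(a,b)}(x) = (1-x)^a x^b. -/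
noncomputable def jw (a b x : ℝ) : ℝ := (1 - x) ^ a * x ^ b

/-- The weighted L² norm ‖g‖_{ω^{(a,b)}}. -/
noncomputable def jwNorm (a b : ℝ) (g : ℝ → ℝ) : ℝ :=
  Real.sqrt (∫ x in (0:ℝ)..1, jw a b x * g x ^ 2)

/-- The Beta function B(a,b) = Γ(a)Γ(b)/Γ(a+b). -/
noncomputable def Betaf (a b : ℝ) : ℝ :=
  Real.Gamma a * Real.Gamma b / Real.Gamma (a + b)

/-- Generalized binomial coefficient binom(x,k) = Γ(x+1)/(Γ(k+1)Γ(x-k+1)). -/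
noncomputable def rbinom (x : ℝ) (k : ℕ) : ℝ :=
  Real.Gamma (x + 1) / (Real.Gamma ((k : ℝ) + 1) * Real.Gamma (x - (k : ℝ) + 1))

/-- Jacobi polynomial on [0,1]: G_n^{(a,b)}(t). -/
noncomputable def JacobiG (n : ℕ) (a b : ℝ) (t : ℝ) : ℝ :=
  ∑ m ∈ Finset.range (n + 1),
    (2 : ℝ) ^ (-(n : ℝ)) * rbinom ((n : ℝ) + a) m * rbinom ((n : ℝ) + b) (n - m) *
      (2 * t - 2) ^ (n - m) * (2 * t) ^ m

/-- The weighted norm value |‖G_n^{(a,b)}‖|. -/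
noncomputable def GNormVal (n : ℕ) (a b : ℝ) : ℝ :=
  Real.sqrt (Real.Gamma ((n : ℝ) + a + 1) * Real.Gamma ((n : ℝ) + b + 1) /
    ((2 * (n : ℝ) + a + b + 1) * Real.Gamma ((n : ℝ) + 1) * Real.Gamma ((n : ℝ) + a + b + 1)))

/-- Jacobi coefficient of g with respect to G_j^{(a,b)} in L²_{ω^{(a,b)}}. -/
noncomputable def jcoeff (a b : ℝ) (g : ℝ → ℝ) (j : ℕ) : ℝ :=
  (∫ x in (0:ℝ)..1, jw a b x * g x * JacobiG j a b x) / GNormVal j a b ^ 2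

/-- Left Riemann-Liouville fractional integral (₀I_x^σ g)(x). -/
noncomputable def leftI (σ : ℝ) (g : ℝ → ℝ) (x : ℝ) : ℝ :=
  (1 / Real.Gamma σ) * ∫ s in (0:ℝ)..x, g s * (x - s) ^ (σ - 1)

/-- Right Riemann-Liouville fractional integral (ₓI₁^σ g)(x). -/
noncomputable def rightI (σ : ℝ) (g : ℝ → ℝ) (x : ℝ) : ℝ :=
  (1 / Real.Gamma σ) * ∫ s in x..(1:ℝ), g s * (s - x) ^ (σ - 1)

/-- The eigenvalues λ_n = (sin(πα)/(sin(π(α-β)) + sin(πβ)))·Γ(n+α)/n!. -/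
noncomputable def lamCoef (α β : ℝ) (n : ℕ) : ℝ :=
  (Real.sin (π * α) / (Real.sin (π * (α - β)) + Real.sin (π * β))) *
    Real.Gamma ((n : ℝ) + α) / (Nat.factorial n : ℝ)

/-- f₁(x) = (1/K(x))·∫₀ˣ f(y) dy. -/
noncomputable def fOne (K f : ℝ → ℝ) (x : ℝ) : ℝ := (1 / K x) * ∫ y in (0:ℝ)..x, f y

/-- f₂(x) = 1/K(x). -/
noncomputable def fTwo (K : ℝ → ℝ) (x : ℝ) : ℝ := 1 / K x

/-- The Jacobi coefficients f_{k,j} of f₁ (k = 1) and f₂ (k = 2) w.r.t. G_j^{(β-1,α-β-1)}. -/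
noncomputable def fCoef (α β : ℝ) (K f : ℝ → ℝ) (k : ℕ) (j : ℕ) : ℝ :=
  jcoeff (β - 1) (α - β - 1) (if k = 1 then fOne K f else fTwo K) j

/-- The constant A = f_{1,0}/f_{2,0}. -/
noncomputable def Aconst (α β : ℝ) (K f : ℝ → ℝ) : ℝ :=
  fCoef α β K f 1 0 / fCoef α β K f 2 0

/-- The solution coefficients c_j = (−f_{1,j+1} + A·f_{2,j+1})/λ_j. -/
noncomputable def cCoef (α β : ℝ) (K f : ℝ → ℝ) (j : ℕ) : ℝ :=
  (-(fCoef α β K f 1 (j + 1)) + Aconst α β K f * fCoef α β K f 2 (j + 1)) / lamCoef α β j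


lemma betaAux (a b : ℝ) (ha : 0 < a) (hb : 0 < b) :
    IntervalIntegrable (fun x : ℝ => x ^ (a-1) * (1-x) ^ (b-1)) volume 0 1 ∧
    ∫ x in (0:ℝ)..1, x ^ (a-1) * (1-x) ^ (b-1) = Betaf a b := by
  have hcf : ∀ x ∈ Set.Icc (0:ℝ) 1,
      ((x:ℂ) ^ ((a:ℂ) - 1) * (1 - (x:ℂ)) ^ ((b:ℂ) - 1)) =
        ((x ^ (a-1) * (1-x) ^ (b-1) : ℝ) : ℂ) := by
    intro x hx
    rw [Complex.ofReal_mul, Complex.ofReal_cpow hx.1, Complex.ofReal_cpow (by linarith [hx.2])]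
    push_cast
    ring_nf
  have hconv := Complex.betaIntegral_convergent (u := (a:ℂ)) (v := (b:ℂ))
    (by simpa using ha) (by simpa using hb)
  constructor
  · constructor
    · have h1 : IntegrableOn (fun x : ℝ => (x:ℂ) ^ ((a:ℂ) - 1) * (1 - (x:ℂ)) ^ ((b:ℂ) - 1))
          (Set.Ioc (0:ℝ) 1) volume := hconv.1
      have h2 : IntegrableOn (fun x : ℝ => ((x:ℂ) ^ ((a:ℂ) - 1) * (1 - (x:ℂ)) ^ ((b:ℂ) - 1)).re)
          (Set.Ioc (0:ℝ) 1) volume := h1.re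
      refine (h2.congr_fun (fun x hx => ?_) measurableSet_Ioc)
      dsimp only
      rw [hcf x ⟨le_of_lt hx.1, hx.2⟩, Complex.ofReal_re]
    · simp [Set.Ioc_eq_empty, integrableOn_empty]
  · have heq : Complex.betaIntegral (a:ℂ) (b:ℂ) =
        ((∫ x in (0:ℝ)..1, x ^ (a-1) * (1-x) ^ (b-1) : ℝ) : ℂ) := by
      rw [Complex.betaIntegral, ← intervalIntegral.integral_ofReal]
      refine intervalIntegral.integral_congr (fun x hx => ?_)
      rw [Set.uIcc_of_le (by norm_num : (0:ℝ) ≤ 1)] at hx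
      exact hcf x hx
    have hG := Complex.Gamma_mul_Gamma_eq_betaIntegral (s := (a:ℂ)) (t := (b:ℂ))
      (by simpa using ha) (by simpa using hb)
    rw [heq] at hG
    have hab : Real.Gamma (a+b) ≠ 0 := (Real.Gamma_pos_of_pos (by linarith)).ne'
    rw [← Complex.ofReal_add, Complex.Gamma_ofReal, Complex.Gamma_ofReal,
      Complex.Gamma_ofReal, ← Complex.ofReal_mul, ← Complex.ofReal_mul] at hG
    have h2 := Complex.ofReal_inj.mp hG
    rw [Betaf, eq_div_iff hab]
    linarith [h2]

/-- weighted bound for the antiderivative of f. -/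
theorem stmt1 (α β : ℝ) (hα : 1 < α ∧ α < 2) (hβ : α - 1 < β ∧ β < 1)
    (f : ℝ → ℝ) (hf : Measurable f)
    (hfin : IntervalIntegrable (fun x => jw β (α - β) x * f x ^ 2) MeasureTheory.volume 0 1) :
    (∫ x in (0:ℝ)..1, jw (β - 1) (α - β - 1) x * (∫ s in (0:ℝ)..x, f s) ^ 2) ≤
      Betaf (α - β) β * Betaf (1 - (α - β)) (1 - β) * jwNorm β (α - β) f ^ 2 := by
  obtain ⟨hα1, hα2⟩ := hα
  obtain ⟨hβ1, hβ2⟩ := hβ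
  have hb0 : 0 < β := by linarith
  have hab0 : 0 < α - β := by linarith
  have hab1 : α - β < 1 := by linarith
  have hjw_nonneg : ∀ (a b : ℝ), ∀ x ∈ Set.Icc (0:ℝ) 1, 0 ≤ jw a b x := by
    intro a b x hx
    exact mul_nonneg (Real.rpow_nonneg (by linarith [hx.2]) _) (Real.rpow_nonneg hx.1 _)
  have hjwmeas : ∀ a b : ℝ, Measurable (jw a b) := by
    intro a b
    unfold jw
    fun_prop
  set W : ℝ → ℝ := fun x => x ^ ((1-(α-β))-1) * (1-x) ^ ((1-β)-1) with hWdef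
  obtain ⟨hWint, hWval⟩ := betaAux (1-(α-β)) (1-β) (by linarith) (by linarith)
  obtain ⟨hUint, hUval⟩ := betaAux (α-β) β hab0 hb0
  set I : ℝ := ∫ x in (0:ℝ)..1, jw β (α - β) x * f x ^ 2 with hIdef
  have hI0 : 0 ≤ I := by
    apply intervalIntegral.integral_nonneg (by norm_num)
    intro x hx
    exact mul_nonneg (hjw_nonneg _ _ x hx) (sq_nonneg _)
  have hWnn : ∀ x ∈ Set.Icc (0:ℝ) 1, 0 ≤ W x := fun x hx =>
    mul_nonneg (Real.rpow_nonneg hx.1 _) (Real.rpow_nonneg (by linarith [hx.2]) _)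
  have hB2 : 0 ≤ Betaf (1-(α-β)) (1-β) := by
    rw [← hWval]
    exact intervalIntegral.integral_nonneg (by norm_num) hWnn
  have hWmeas : Measurable W := by fun_prop
  set M : ℝ := Betaf (1-(α-β)) (1-β) * I with hMdef
  have hvf2_int : IntegrableOn (fun s => jw β (α-β) s * f s ^ 2) (Set.Ioc 0 1) volume :=
    (intervalIntegrable_iff_integrableOn_Ioc_of_le (by norm_num)).mp hfin
  have hW_int : IntegrableOn W (Set.Ioc 0 1) volume :=
    (intervalIntegrable_iff_integrableOn_Ioc_of_le (by norm_num)).mp hWint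
  -- the key pointwise claim
  have key : ∀ x, 0 ≤ x → x ≤ 1 → IntegrableOn f (Set.Ioc 0 x) volume ∧
      (∫ s in (0:ℝ)..x, f s) ^ 2 ≤ M := by
    intro x hx0 hx1
    set μx := volume.restrict (Set.Ioc (0:ℝ) x) with hμx
    set A : ℝ → ℝ := fun s => Real.sqrt (jw β (α-β) s) * |f s| with hA
    set Bg : ℝ → ℝ := fun s => Real.sqrt (W s) with hBg
    have hIocsub : Set.Ioc (0:ℝ) x ⊆ Set.Ioc (0:ℝ) 1 := Set.Ioc_subset_Ioc_right hx1
    have hsub : ∀ s ∈ Set.Ioc (0:ℝ) x, s ∈ Set.Icc (0:ℝ) 1 := fun s hs =>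
      ⟨le_of_lt hs.1, le_trans hs.2 hx1⟩
    have hA2 : IntegrableOn (fun s => A s ^ 2) (Set.Ioc 0 x) volume := by
      refine ((hvf2_int.mono_set hIocsub).congr_fun (fun s hs => ?_) measurableSet_Ioc)
      have h0 : 0 ≤ jw β (α-β) s := hjw_nonneg _ _ s (hsub s hs)
      simp only [hA, mul_pow, Real.sq_sqrt h0, sq_abs]
    have hBg2 : IntegrableOn (fun s => Bg s ^ 2) (Set.Ioc 0 x) volume := by
      refine ((hW_int.mono_set hIocsub).congr_fun (fun s hs => ?_) measurableSet_Ioc)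
      exact (Real.sq_sqrt (hWnn s (hsub s hs))).symm
    have hAmeas : Measurable A :=
      (Real.continuous_sqrt.measurable.comp (hjwmeas β (α-β))).mul hf.abs
    have hBmeas : Measurable Bg := Real.continuous_sqrt.measurable.comp hWmeas
    have hAmem : MemLp A 2 μx := (memLp_two_iff_integrable_sq hAmeas.aestronglyMeasurable).mpr hA2
    have hBmem : MemLp Bg 2 μx := (memLp_two_iff_integrable_sq hBmeas.aestronglyMeasurable).mpr hBg2
    have hABint : Integrable (fun s => A s * Bg s) μx := by
      have h12 : (1:ENNReal)/1 = 1/2 + 1/2 := by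
        rw [ENNReal.div_add_div_same, one_div_one]
        norm_num
        exact (ENNReal.div_self two_ne_zero ENNReal.ofNat_ne_top).symm
      have h : MemLp (fun s => A s • Bg s) 1 μx := hBmem.smul hAmem
      rw [memLp_one_iff_integrable] at h
      simpa [Pi.smul_apply, smul_eq_mul] using h
    have hprod : ∀ s ∈ Set.Ioc (0:ℝ) x, s ≠ 1 → A s * Bg s = |f s| := by
      intro s hs hne
      have hs0 : (0:ℝ) < s := hs.1
      have hs1 : s < 1 := lt_of_le_of_ne (le_trans hs.2 hx1) hne
      have h1s : (0:ℝ) < 1 - s := by linarith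
      have hvW : jw β (α-β) s * W s = 1 := by
        show (1-s) ^ β * s ^ (α-β) * (s ^ ((1-(α-β))-1) * (1-s) ^ ((1-β)-1)) = 1
        calc (1-s) ^ β * s ^ (α-β) * (s ^ ((1-(α-β))-1) * (1-s) ^ ((1-β)-1))
            = ((1-s) ^ β * (1-s) ^ ((1-β)-1)) * (s ^ (α-β) * s ^ ((1-(α-β))-1)) := by ring
          _ = (1-s) ^ (β + ((1-β)-1)) * s ^ ((α-β) + ((1-(α-β))-1)) := by
              rw [Real.rpow_add h1s, Real.rpow_add hs0]
          _ = 1 := by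
              rw [show β + ((1-β)-1) = (0:ℝ) by ring,
                show (α-β) + ((1-(α-β))-1) = (0:ℝ) by ring, Real.rpow_zero, Real.rpow_zero,
                mul_one]
      have hv0 : 0 ≤ jw β (α-β) s := hjw_nonneg _ _ s (hsub s hs)
      calc A s * Bg s = |f s| * (Real.sqrt (jw β (α-β) s) * Real.sqrt (W s)) := by
            simp only [hA, hBg]; ring
        _ = |f s| * Real.sqrt (jw β (α-β) s * W s) := by rw [Real.sqrt_mul hv0]
        _ = |f s| := by rw [hvW, Real.sqrt_one, mul_one]
    have hae1 : ∀ᵐ s ∂μx, s ∈ Set.Ioc (0:ℝ) x := ae_restrict_mem measurableSet_Ioc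
    have hne1 : ∀ᵐ s ∂μx, s ≠ (1:ℝ) := by
      have h0 : μx {(1:ℝ)} = 0 := by
        rw [hμx, Measure.restrict_apply (measurableSet_singleton 1)]
        exact measure_mono_null Set.inter_subset_left (measure_singleton 1)
      have hset : {s : ℝ | ¬ s ≠ (1:ℝ)} = {(1:ℝ)} := by ext s; simp
      rw [ae_iff, hset]
      exact h0
    have hfae : (fun s => A s * Bg s) =ᵐ[μx] fun s => |f s| := by
      filter_upwards [hae1, hne1] with s hs hne using hprod s hs hne
    have habs_int : Integrable (fun s => |f s|) μx := hABint.congr hfae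
    have hf_int : IntegrableOn f (Set.Ioc 0 x) volume := by
      refine (integrable_norm_iff (hf.aestronglyMeasurable)).mp ?_
      simpa [Real.norm_eq_abs] using habs_int
    refine ⟨hf_int, ?_⟩
    have hconj : (2:ℝ).HolderConjugate 2 := ⟨by norm_num, by norm_num, by norm_num⟩
    have hof2 : ENNReal.ofReal (2:ℝ) = 2 := by norm_num
    have hAnn : 0 ≤ᵐ[μx] A := Eventually.of_forall fun s =>
      mul_nonneg (Real.sqrt_nonneg _) (abs_nonneg _)
    have hBnn : 0 ≤ᵐ[μx] Bg := Eventually.of_forall fun s => Real.sqrt_nonneg _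
    have hholder := MeasureTheory.integral_mul_le_Lp_mul_Lq_of_nonneg hconj hAnn hBnn
      (by rw [hof2]; exact hAmem) (by rw [hof2]; exact hBmem)
    have hrpow2 : ∀ y : ℝ, y ^ (2:ℝ) = y ^ (2:ℕ) := fun y => by
      rw [show (2:ℝ) = ((2:ℕ):ℝ) by norm_num, Real.rpow_natCast]
    have hA2le : ∫ s, A s ^ (2:ℝ) ∂μx ≤ I := by
      have h1 : ∫ s, A s ^ (2:ℝ) ∂μx = ∫ s in Set.Ioc (0:ℝ) x, jw β (α-β) s * f s ^ 2 := by
        refine setIntegral_congr_fun measurableSet_Ioc (fun s hs => ?_)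
        have h0 : 0 ≤ jw β (α-β) s := hjw_nonneg _ _ s (hsub s hs)
        rw [hrpow2]
        simp only [hA, mul_pow, Real.sq_sqrt h0, sq_abs]
      rw [h1, hIdef, intervalIntegral.integral_of_le (by norm_num : (0:ℝ) ≤ 1)]
      refine setIntegral_mono_set hvf2_int ?_ (HasSubset.Subset.eventuallyLE hIocsub)
      refine (ae_restrict_iff' measurableSet_Ioc).mpr (Eventually.of_forall fun s hs => ?_)
      exact mul_nonneg (hjw_nonneg _ _ s ⟨le_of_lt hs.1, hs.2⟩) (sq_nonneg _)
    have hBg2le : ∫ s, Bg s ^ (2:ℝ) ∂μx ≤ Betaf (1-(α-β)) (1-β) := by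
      have h1 : ∫ s, Bg s ^ (2:ℝ) ∂μx = ∫ s in Set.Ioc (0:ℝ) x, W s := by
        refine setIntegral_congr_fun measurableSet_Ioc (fun s hs => ?_)
        rw [hrpow2]
        exact Real.sq_sqrt (hWnn s (hsub s hs))
      rw [h1, ← hWval, intervalIntegral.integral_of_le (by norm_num : (0:ℝ) ≤ 1)]
      refine setIntegral_mono_set hW_int ?_ (HasSubset.Subset.eventuallyLE hIocsub)
      refine (ae_restrict_iff' measurableSet_Ioc).mpr (Eventually.of_forall fun s hs => ?_)
      exact hWnn s ⟨le_of_lt hs.1, hs.2⟩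
    have habs : |∫ s in (0:ℝ)..x, f s| ≤
        Real.sqrt I * Real.sqrt (Betaf (1-(α-β)) (1-β)) := by
      have e0 : |∫ s in (0:ℝ)..x, f s| ≤ ∫ s in (0:ℝ)..x, |f s| :=
        intervalIntegral.abs_integral_le_integral_abs hx0
      have e1 : ∫ s in (0:ℝ)..x, |f s| = ∫ s, A s * Bg s ∂μx := by
        rw [intervalIntegral.integral_of_le hx0]
        exact (integral_congr_ae hfae).symm
      have e2 : (∫ s, A s ^ (2:ℝ) ∂μx) ^ ((1:ℝ)/2) * (∫ s, Bg s ^ (2:ℝ) ∂μx) ^ ((1:ℝ)/2) ≤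
          Real.sqrt I * Real.sqrt (Betaf (1-(α-β)) (1-β)) := by
        have hA2nn : 0 ≤ ∫ s, A s ^ (2:ℝ) ∂μx := by
          refine integral_nonneg fun s => ?_
          rw [hrpow2]
          exact sq_nonneg _
        have hB2nn : 0 ≤ ∫ s, Bg s ^ (2:ℝ) ∂μx := by
          refine integral_nonneg fun s => ?_
          rw [hrpow2]
          exact sq_nonneg _
        rw [← Real.sqrt_eq_rpow, ← Real.sqrt_eq_rpow]
        exact mul_le_mul (Real.sqrt_le_sqrt hA2le) (Real.sqrt_le_sqrt hBg2le)
          (Real.sqrt_nonneg _) (Real.sqrt_nonneg _)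
      calc |∫ s in (0:ℝ)..x, f s| ≤ ∫ s, A s * Bg s ∂μx := by rw [← e1]; exact e0
        _ ≤ (∫ s, A s ^ (2:ℝ) ∂μx) ^ ((1:ℝ)/2) * (∫ s, Bg s ^ (2:ℝ) ∂μx) ^ ((1:ℝ)/2) := hholder
        _ ≤ _ := e2
    have hsq : (∫ s in (0:ℝ)..x, f s) ^ 2 ≤
        (Real.sqrt I * Real.sqrt (Betaf (1-(α-β)) (1-β))) ^ 2 := by
      rw [← sq_abs]
      exact pow_le_pow_left₀ (abs_nonneg _) habs 2
    refine hsq.trans (le_of_eq ?_)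
    rw [← Real.sqrt_mul hI0, Real.sq_sqrt (mul_nonneg hI0 hB2), hMdef, mul_comm]
  -- now the integral estimate
  have hIcc1 : (1:ℝ) ∈ Set.Icc (0:ℝ) 1 := ⟨by norm_num, le_refl _⟩
  have hfI1 : IntegrableOn f (Set.Icc (0:ℝ) 1) volume := by
    rw [integrableOn_Icc_iff_integrableOn_Ioc]
    exact (key 1 (by norm_num) (le_refl _)).1
  have hFcont : ContinuousOn (fun x => ∫ t in (0:ℝ)..x, f t) (Set.Icc (0:ℝ) 1) := by
    have h := intervalIntegral.continuousOn_primitive (f := f) (μ := volume) (a := (0:ℝ)) (b := 1) hfI1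
    refine ContinuousOn.congr h (fun x hx => ?_)
    rw [intervalIntegral.integral_of_le hx.1]
  set g : ℝ → ℝ := fun x => jw (β - 1) (α - β - 1) x * (∫ s in (0:ℝ)..x, f s) ^ 2 with hgdef
  have hu_int : IntegrableOn (fun x => jw (β - 1) (α - β - 1) x) (Set.Ioc (0:ℝ) 1) volume := by
    have h := (intervalIntegrable_iff_integrableOn_Ioc_of_le (by norm_num : (0:ℝ) ≤ 1)).mp hUint
    refine h.congr_fun (fun s _ => ?_) measurableSet_Ioc
    show s ^ ((α-β)-1) * (1-s) ^ (β-1) = (1-s) ^ (β-1) * s ^ (α-β-1)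
    rw [show (α-β)-1 = α-β-1 by ring]
    ring
  have hbound_int : IntegrableOn (fun x => jw (β - 1) (α - β - 1) x * M) (Set.Ioc (0:ℝ) 1)
      volume := hu_int.mul_const M
  have hgle : ∀ x ∈ Set.Ioc (0:ℝ) 1, g x ≤ jw (β - 1) (α - β - 1) x * M := fun x hx =>
    mul_le_mul_of_nonneg_left (key x (le_of_lt hx.1) hx.2).2
      (hjw_nonneg _ _ x ⟨le_of_lt hx.1, hx.2⟩)
  have hgnn : ∀ x ∈ Set.Ioc (0:ℝ) 1, 0 ≤ g x := fun x hx =>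
    mul_nonneg (hjw_nonneg _ _ x ⟨le_of_lt hx.1, hx.2⟩) (sq_nonneg _)
  have hg_meas : AEStronglyMeasurable g (volume.restrict (Set.Ioc (0:ℝ) 1)) := by
    have h1 : AEStronglyMeasurable (fun x => jw (β - 1) (α - β - 1) x)
        (volume.restrict (Set.Ioc (0:ℝ) 1)) := (hjwmeas _ _).aestronglyMeasurable
    have h2 : AEStronglyMeasurable (fun x => (∫ s in (0:ℝ)..x, f s) ^ 2)
        (volume.restrict (Set.Ioc (0:ℝ) 1)) :=
      ((hFcont.mono (Set.Ioc_subset_Icc_self)).pow 2).aestronglyMeasurable measurableSet_Ioc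
    exact h1.mul h2
  have hg_int : IntegrableOn g (Set.Ioc (0:ℝ) 1) volume := by
    refine Integrable.mono' hbound_int hg_meas ?_
    refine (ae_restrict_iff' measurableSet_Ioc).mpr (Eventually.of_forall fun x hx => ?_)
    rw [Real.norm_eq_abs, abs_of_nonneg (hgnn x hx)]
    exact hgle x hx
  have hfinal : (∫ x in (0:ℝ)..1, g x) ≤ ∫ x in Set.Ioc (0:ℝ) 1,
      jw (β - 1) (α - β - 1) x * M := by
    rw [intervalIntegral.integral_of_le (by norm_num : (0:ℝ) ≤ 1)]
    exact setIntegral_mono_on hg_int hbound_int measurableSet_Ioc hgle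
  have hval : ∫ x in Set.Ioc (0:ℝ) 1, jw (β - 1) (α - β - 1) x * M =
      Betaf (α - β) β * M := by
    rw [integral_mul_const, ← intervalIntegral.integral_of_le (by norm_num : (0:ℝ) ≤ 1),
      ← hUval]
    congr 1
    refine intervalIntegral.integral_congr (fun x _ => ?_)
    show (1-x) ^ (β-1) * x ^ (α-β-1) = x ^ ((α-β)-1) * (1-x) ^ (β-1)
    rw [show (α-β)-1 = α-β-1 by ring]
    ring
  have hnorm : jwNorm β (α - β) f ^ 2 = I := Real.sq_sqrt hI0
  calc (∫ x in (0:ℝ)..1, jw (β - 1) (α - β - 1) x * (∫ s in (0:ℝ)..x, f s) ^ 2)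
      = ∫ x in (0:ℝ)..1, g x := rfl
    _ ≤ Betaf (α - β) β * M := hfinal.trans (le_of_eq hval)
    _ = Betaf (α - β) β * Betaf (1 - (α - β)) (1 - β) * jwNorm β (α - β) f ^ 2 := by
        rw [hnorm, hMdef]
        ring
end

section
/- Let 1<α<2 and α−1<β<1, let K:[0,1]→ℝ satisfy K(x) ≥ K_m > 0 for all x, let f:(0,1)→ℝ be measurable with ‖f‖_{ω^{(β,α−β)}} < ∞, and set f₁(x) := (1/K(x))·∫₀^x f(y)dy. Then ‖f₁‖_{ω^{(β−1,α−β−1)}} ≤ (1/K_m)·( B(α−β,β)·B(1−(α−β),1−β) )^{1/2}·‖f‖_{ω^{(β,α−β)}}, where B(a,b) := Γ(a)Γ(b)/Γ(a+b) is the Beta function. -/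
open MeasureTheory Real Filter

section helpers

lemma rbeta_cpx_eq {a b : ℝ} (ha : 0 < a) (hb : 0 < b) :
    Complex.betaIntegral a b = ((Real.Gamma a * Real.Gamma b / Real.Gamma (a + b) : ℝ) : ℂ) := by
  have h := Complex.Gamma_mul_Gamma_eq_betaIntegral (s := a) (t := b) (by simpa using ha)
    (by simpa using hb)
  have hne : Complex.Gamma ((a : ℂ) + b) ≠ 0 := by
    rw [show ((a:ℂ) + b) = ((a + b : ℝ) : ℂ) by push_cast; ring, Complex.Gamma_ofReal]
    exact_mod_cast (Real.Gamma_pos_of_pos (by linarith)).ne'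
  rw [Complex.ofReal_div, Complex.ofReal_mul, ← Complex.Gamma_ofReal, ← Complex.Gamma_ofReal,
    ← Complex.Gamma_ofReal, Complex.ofReal_add, eq_div_iff hne, mul_comm, ← h]

lemma rbeta_eqon {a b : ℝ} :
    Set.EqOn (fun x : ℝ => (((x:ℝ) ^ (a - 1) * (1 - x) ^ (b - 1) : ℝ) : ℂ))
      (fun x : ℝ => (x : ℂ) ^ ((a : ℂ) - 1) * (1 - (x : ℂ)) ^ ((b : ℂ) - 1))
      (Set.Icc 0 1) := by
  intro x hx
  simp only
  rw [Complex.ofReal_mul, Complex.ofReal_cpow hx.1, Complex.ofReal_cpow (by linarith [hx.2])]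
  push_cast
  ring_nf

lemma rbeta_integrableOn {a b : ℝ} (ha : 0 < a) (hb : 0 < b) :
    IntegrableOn (fun x : ℝ => x ^ (a - 1) * (1 - x) ^ (b - 1)) (Set.Ioc 0 1) := by
  have h := (Complex.betaIntegral_convergent (u := a) (v := b) (by simpa using ha)
    (by simpa using hb)).1
  have h2 : IntegrableOn
      (fun x : ℝ => (((x:ℝ) ^ (a - 1) * (1 - x) ^ (b - 1) : ℝ) : ℂ)) (Set.Ioc 0 1) :=
    h.congr_fun (fun x hx => (rbeta_eqon (Set.Ioc_subset_Icc_self hx)).symm) measurableSet_Ioc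
  have h3 := h2.re
  simp at h3
  exact h3

lemma rbeta_val {a b : ℝ} (ha : 0 < a) (hb : 0 < b) :
    ∫ x in Set.Ioc (0:ℝ) 1, x ^ (a - 1) * (1 - x) ^ (b - 1) =
      Real.Gamma a * Real.Gamma b / Real.Gamma (a + b) := by
  have h1 : (∫ x in (0:ℝ)..1, (((x:ℝ) ^ (a - 1) * (1 - x) ^ (b - 1) : ℝ) : ℂ)) =
      Complex.betaIntegral a b := by
    rw [Complex.betaIntegral]
    refine intervalIntegral.integral_congr ?_
    intro x hx
    exact rbeta_eqon (by simpa [Set.uIcc_of_le (zero_le_one' ℝ)] using hx)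
  rw [intervalIntegral.integral_ofReal, rbeta_cpx_eq ha hb] at h1
  have := Complex.ofReal_inj.mp h1
  rwa [intervalIntegral.integral_of_le zero_le_one] at this

/-- Cauchy–Schwarz for integrals of nonnegative functions. -/
lemma cs_sq {μ : Measure ℝ} {φ ψ : ℝ → ℝ} (hφ0 : 0 ≤ᵐ[μ] φ) (hψ0 : 0 ≤ᵐ[μ] ψ)
    (hφm : AEStronglyMeasurable φ μ) (hψm : AEStronglyMeasurable ψ μ)
    (hφ2 : Integrable (fun y => φ y ^ 2) μ) (hψ2 : Integrable (fun y => ψ y ^ 2) μ) :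
    ∫ y, φ y * ψ y ∂μ ≤ Real.sqrt (∫ y, φ y ^ 2 ∂μ) * Real.sqrt (∫ y, ψ y ^ 2 ∂μ) := by
  have hpq : Real.HolderConjugate 2 2 := Real.holderConjugate_iff.mpr ⟨by norm_num, by norm_num⟩
  have mφ : MemLp φ (ENNReal.ofReal 2) μ := by
    rw [ENNReal.ofReal_ofNat]
    exact (memLp_two_iff_integrable_sq hφm).2 hφ2
  have mψ : MemLp ψ (ENNReal.ofReal 2) μ := by
    rw [ENNReal.ofReal_ofNat]
    exact (memLp_two_iff_integrable_sq hψm).2 hψ2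
  have h := integral_mul_le_Lp_mul_Lq_of_nonneg hpq hφ0 hψ0 mφ mψ
  have h2 : ∀ x : ℝ, x ^ (2:ℝ) = x ^ 2 := fun x => by
    rw [show (2:ℝ) = ((2:ℕ) : ℝ) by norm_num, Real.rpow_natCast]
  simp only [h2] at h
  calc ∫ y, φ y * ψ y ∂μ ≤ (∫ y, φ y ^ 2 ∂μ) ^ ((1:ℝ)/2) * (∫ y, ψ y ^ 2 ∂μ) ^ ((1:ℝ)/2) := h
    _ = Real.sqrt (∫ y, φ y ^ 2 ∂μ) * Real.sqrt (∫ y, ψ y ^ 2 ∂μ) := by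
        rw [Real.sqrt_eq_rpow, Real.sqrt_eq_rpow]

end helpers

/-- stability estimate for f₁. -/
theorem stmt2 (α β Km : ℝ) (hα : 1 < α ∧ α < 2) (hβ : α - 1 < β ∧ β < 1)
    (K f : ℝ → ℝ) (hKm : 0 < Km) (hK : ∀ x ∈ Set.Icc (0:ℝ) 1, Km ≤ K x)
    (hf : Measurable f)
    (hfin : IntervalIntegrable (fun x => jw β (α - β) x * f x ^ 2) MeasureTheory.volume 0 1) :
    jwNorm (β - 1) (α - β - 1) (fun x => (1 / K x) * ∫ y in (0:ℝ)..x, f y) ≤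
      (1 / Km) * Real.sqrt (Betaf (α - β) β * Betaf (1 - (α - β)) (1 - β)) *
        jwNorm β (α - β) f := by
  obtain ⟨hα1, hα2⟩ := hα
  obtain ⟨hβ1, hβ2⟩ := hβ
  have hab1 : 0 < α - β := by linarith
  have hab2 : α - β < 1 := by linarith
  have hb0 : 0 < β := by linarith
  set B1 := Betaf (α - β) β with hB1
  set B2 := Betaf (1 - (α - β)) (1 - β) with hB2
  have hB1pos : 0 < B1 := by
    exact div_pos (mul_pos (Real.Gamma_pos_of_pos hab1) (Real.Gamma_pos_of_pos hb0))
      (Real.Gamma_pos_of_pos (by linarith))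
  have hB2pos : 0 < B2 := by
    exact div_pos (mul_pos (Real.Gamma_pos_of_pos (by linarith)) (Real.Gamma_pos_of_pos (by linarith)))
      (Real.Gamma_pos_of_pos (by linarith))
  have hGint : IntegrableOn (fun y => jw β (α - β) y * f y ^ 2) (Set.Ioc 0 1) volume := hfin.1
  set G := ∫ y in Set.Ioc (0:ℝ) 1, jw β (α - β) y * f y ^ 2 with hGdef
  have hjwnn : ∀ y ∈ Set.Ioc (0:ℝ) 1, 0 ≤ jw β (α - β) y := by
    intro y hy
    exact mul_nonneg (Real.rpow_nonneg (by linarith [hy.2]) _) (Real.rpow_nonneg hy.1.le _)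
  have hG0 : 0 ≤ G := setIntegral_nonneg measurableSet_Ioc
    (fun y hy => mul_nonneg (hjwnn y hy) (sq_nonneg _))
  -- beta integrand facts
  have hB2int : IntegrableOn (fun y : ℝ => y ^ (β - α) * (1 - y) ^ (-β)) (Set.Ioc 0 1) := by
    have := rbeta_integrableOn (a := 1 - (α - β)) (b := 1 - β) (by linarith) (by linarith)
    simpa [show 1 - (α - β) - 1 = β - α by ring, show 1 - β - 1 = -β by ring] using this
  have hB2val : ∫ y in Set.Ioc (0:ℝ) 1, y ^ (β - α) * (1 - y) ^ (-β) = B2 := by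
    have := rbeta_val (a := 1 - (α - β)) (b := 1 - β) (by linarith) (by linarith)
    rw [hB2, Betaf]
    simpa [show 1 - (α - β) - 1 = β - α by ring, show 1 - β - 1 = -β by ring] using this
  have hB1int : IntegrableOn (fun y : ℝ => y ^ (α - β - 1) * (1 - y) ^ (β - 1)) (Set.Ioc 0 1) :=
    rbeta_integrableOn hab1 hb0
  have hB1val : ∫ y in Set.Ioc (0:ℝ) 1, y ^ (α - β - 1) * (1 - y) ^ (β - 1) = B1 :=
    rbeta_val hab1 hb0
  -- key pointwise Cauchy-Schwarz bound
  have hkey : ∀ x ∈ Set.Ioc (0:ℝ) 1, (∫ y in (0:ℝ)..x, f y) ^ 2 ≤ B2 * G := by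
    intro x hx
    set φ : ℝ → ℝ := fun y => |f y| * Real.sqrt (jw β (α - β) y) with hφ
    set ψ : ℝ → ℝ := fun y => Real.sqrt (y ^ (β - α) * (1 - y) ^ (-β)) with hψ
    have hsub : Set.Ioo (0:ℝ) x ⊆ Set.Ioc 0 1 := fun y hy => ⟨hy.1, (hy.2.trans_le hx.2).le⟩
    have hφsq : Set.EqOn (fun y => φ y ^ 2) (fun y => jw β (α - β) y * f y ^ 2)
        (Set.Ioo 0 x) := by
      intro y hy
      have h1 : (0:ℝ) ≤ jw β (α - β) y := hjwnn y (hsub hy)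
      simp only [hφ, mul_pow, sq_abs, Real.sq_sqrt h1]
      ring
    have hψsq : Set.EqOn (fun y => ψ y ^ 2) (fun y => y ^ (β - α) * (1 - y) ^ (-β))
        (Set.Ioo 0 x) := by
      intro y hy
      have h1 : (0:ℝ) ≤ y ^ (β - α) * (1 - y) ^ (-β) :=
        mul_nonneg (Real.rpow_nonneg hy.1.le _) (Real.rpow_nonneg (by linarith [(hsub hy).2]) _)
      simp only [hψ, Real.sq_sqrt h1]
    have hφ2 : IntegrableOn (fun y => φ y ^ 2) (Set.Ioo 0 x) :=
      (hGint.mono_set hsub).congr_fun (fun y hy => (hφsq hy).symm) measurableSet_Ioo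
    have hψ2 : IntegrableOn (fun y => ψ y ^ 2) (Set.Ioo 0 x) :=
      (hB2int.mono_set hsub).congr_fun (fun y hy => (hψsq hy).symm) measurableSet_Ioo
    have hφm : Measurable φ := by
      rw [hφ]; simp only [jw]
      exact hf.abs.mul (by fun_prop)
    have hψm : Measurable ψ := by rw [hψ]; fun_prop
    have hcs := cs_sq (μ := volume.restrict (Set.Ioo 0 x))
      (Eventually.of_forall fun y => mul_nonneg (abs_nonneg _) (Real.sqrt_nonneg _))
      (Eventually.of_forall fun y => Real.sqrt_nonneg _)
      hφm.aestronglyMeasurable hψm.aestronglyMeasurable hφ2 hψ2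
    have hφle : ∫ y in Set.Ioo (0:ℝ) x, φ y ^ 2 ≤ G := by
      rw [setIntegral_congr_fun measurableSet_Ioo hφsq]
      exact setIntegral_mono_set hGint
        ((ae_restrict_iff' measurableSet_Ioc).2 (Eventually.of_forall fun y hy =>
          mul_nonneg (hjwnn y hy) (sq_nonneg _)))
        (HasSubset.Subset.eventuallyLE hsub)
    have hψle : ∫ y in Set.Ioo (0:ℝ) x, ψ y ^ 2 ≤ B2 := by
      rw [setIntegral_congr_fun measurableSet_Ioo hψsq, ← hB2val]
      exact setIntegral_mono_set hB2int
        ((ae_restrict_iff' measurableSet_Ioc).2 (Eventually.of_forall fun y hy =>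
          mul_nonneg (Real.rpow_nonneg hy.1.le _) (Real.rpow_nonneg (by linarith [hy.2]) _)))
        (HasSubset.Subset.eventuallyLE hsub)
    have hone : Set.EqOn (fun y => φ y * ψ y) (fun y => ‖f y‖) (Set.Ioo 0 x) := by
      intro y hy
      have hy1 : 0 < y := hy.1
      have hy2 : y < 1 := hy.2.trans_le hx.2
      have h1y : (0:ℝ) < 1 - y := by linarith
      have hwpos : (0:ℝ) ≤ jw β (α - β) y := hjwnn y (hsub hy)
      have hprod : jw β (α - β) y * (y ^ (β - α) * (1 - y) ^ (-β)) = 1 := by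
        simp only [jw]
        rw [show (1 - y) ^ β * y ^ (α - β) * (y ^ (β - α) * (1 - y) ^ (-β)) =
          ((1 - y) ^ β * (1 - y) ^ (-β)) * (y ^ (α - β) * y ^ (β - α)) by ring,
          ← Real.rpow_add h1y, ← Real.rpow_add hy1]
        norm_num
      simp only [hφ, hψ]
      rw [mul_assoc, ← Real.sqrt_mul hwpos, hprod, Real.sqrt_one, mul_one, Real.norm_eq_abs]
    have hIbound : |∫ y in (0:ℝ)..x, f y| ≤ ∫ y in Set.Ioo (0:ℝ) x, φ y * ψ y := by
      rw [intervalIntegral.integral_of_le hx.1.le, integral_Ioc_eq_integral_Ioo,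
        setIntegral_congr_fun measurableSet_Ioo hone]
      exact (Real.norm_eq_abs _) ▸ norm_integral_le_integral_norm f
    have hR0 : 0 ≤ Real.sqrt G * Real.sqrt B2 :=
      mul_nonneg (Real.sqrt_nonneg _) (Real.sqrt_nonneg _)
    have hchain : |∫ y in (0:ℝ)..x, f y| ≤ Real.sqrt G * Real.sqrt B2 := by
      refine hIbound.trans (hcs.trans ?_)
      exact mul_le_mul (Real.sqrt_le_sqrt hφle) (Real.sqrt_le_sqrt hψle)
        (Real.sqrt_nonneg _) (Real.sqrt_nonneg _)
    calc (∫ y in (0:ℝ)..x, f y) ^ 2 = |∫ y in (0:ℝ)..x, f y| ^ 2 := (sq_abs _).symm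
      _ ≤ (Real.sqrt G * Real.sqrt B2) ^ 2 := by
          exact pow_le_pow_left₀ (abs_nonneg _) hchain 2
      _ = B2 * G := by
          rw [mul_pow, Real.sq_sqrt hG0, Real.sq_sqrt hB2pos.le]; ring
  -- main estimate
  rw [jwNorm, jwNorm, intervalIntegral.integral_of_le zero_le_one,
    intervalIntegral.integral_of_le zero_le_one]
  have hmono : (∫ x in Set.Ioc (0:ℝ) 1,
      jw (β - 1) (α - β - 1) x * ((1 / K x) * ∫ y in (0:ℝ)..x, f y) ^ 2) ≤
      ∫ x in Set.Ioc (0:ℝ) 1, (B2 * G / Km ^ 2) * (x ^ (α - β - 1) * (1 - x) ^ (β - 1)) := by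
    refine integral_mono_of_nonneg ?_ (hB1int.const_mul _) ?_
    · filter_upwards [ae_restrict_mem measurableSet_Ioc] with x hx
      exact mul_nonneg (mul_nonneg (Real.rpow_nonneg (by linarith [hx.2]) _)
        (Real.rpow_nonneg hx.1.le _)) (sq_nonneg _)
    · filter_upwards [ae_restrict_mem measurableSet_Ioc] with x hx
      have h1 : Km ≤ K x := hK x ⟨hx.1.le, hx.2⟩
      have hKpos : 0 < K x := lt_of_lt_of_le hKm h1
      have h2 : (1 / K x) ^ 2 ≤ (1 / Km) ^ 2 :=
        pow_le_pow_left₀ (by positivity) (one_div_le_one_div_of_le hKm h1) 2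
      have h3 := hkey x hx
      have hjw0 : 0 ≤ (1 - x) ^ (β - 1) * x ^ (α - β - 1) :=
        mul_nonneg (Real.rpow_nonneg (by linarith [hx.2]) _) (Real.rpow_nonneg hx.1.le _)
      calc jw (β - 1) (α - β - 1) x * ((1 / K x) * ∫ y in (0:ℝ)..x, f y) ^ 2
          = ((1 - x) ^ (β - 1) * x ^ (α - β - 1)) *
            ((1 / K x) ^ 2 * (∫ y in (0:ℝ)..x, f y) ^ 2) := by
            simp only [jw]; ring
        _ ≤ ((1 - x) ^ (β - 1) * x ^ (α - β - 1)) * ((1 / Km) ^ 2 * (B2 * G)) := by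
            refine mul_le_mul_of_nonneg_left ?_ hjw0
            exact mul_le_mul h2 h3 (sq_nonneg _) (by positivity)
        _ = (B2 * G / Km ^ 2) * (x ^ (α - β - 1) * (1 - x) ^ (β - 1)) := by
            field_simp
  rw [MeasureTheory.integral_const_mul, hB1val] at hmono
  have heq : B2 * G / Km ^ 2 * B1 = ((1 / Km) * Real.sqrt (B1 * B2) * Real.sqrt G) ^ 2 := by
    rw [mul_pow, mul_pow, Real.sq_sqrt (mul_nonneg hB1pos.le hB2pos.le), Real.sq_sqrt hG0]
    field_simp
  have hrhs0 : 0 ≤ (1 / Km) * Real.sqrt (B1 * B2) * Real.sqrt G := by positivity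
  calc Real.sqrt (∫ x in Set.Ioc (0:ℝ) 1,
        jw (β - 1) (α - β - 1) x * ((1 / K x) * ∫ y in (0:ℝ)..x, f y) ^ 2)
      ≤ Real.sqrt (B2 * G / Km ^ 2 * B1) := Real.sqrt_le_sqrt hmono
    _ = (1 / Km) * Real.sqrt (B1 * B2) * Real.sqrt G := by
        rw [heq, Real.sqrt_sq hrhs0]
end

section
/- Let 1<α<2 and α−1≤β≤1. Then for every j ∈ ℕ, |‖G_j^{(α−β,β)}‖|² / |‖G_{j+1}^{(β−1,α−β−1)}‖|² = (j+1)/(j+α), and consequently 1/2 ≤ |‖G_j^{(α−β,β)}‖|² / |‖G_{j+1}^{(β−1,α−β−1)}‖|² ≤ 1. -/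
open MeasureTheory Real Filter

/-- ratio of squared Jacobi norm values. -/
theorem stmt4 (α β : ℝ) (hα : 1 < α ∧ α < 2) (hβ : α - 1 ≤ β ∧ β ≤ 1) (j : ℕ) :
    GNormVal j (α - β) β ^ 2 / GNormVal (j + 1) (β - 1) (α - β - 1) ^ 2 =
        ((j : ℝ) + 1) / ((j : ℝ) + α) ∧
      1 / 2 ≤ GNormVal j (α - β) β ^ 2 / GNormVal (j + 1) (β - 1) (α - β - 1) ^ 2 ∧
      GNormVal j (α - β) β ^ 2 / GNormVal (j + 1) (β - 1) (α - β - 1) ^ 2 ≤ 1 := by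
  obtain ⟨hα1, hα2⟩ := hα
  obtain ⟨hβ1, hβ2⟩ := hβ
  have hj : (0:ℝ) ≤ (j : ℝ) := Nat.cast_nonneg j
  have p1 : 0 < (j:ℝ) + (α - β) + 1 := by linarith
  have p2 : 0 < (j:ℝ) + β + 1 := by linarith
  have p3 : 0 < (j:ℝ) + 1 := by linarith
  have p4 : 0 < (j:ℝ) + (α - β) + β + 1 := by linarith
  have p5 : 0 < 2*(j:ℝ) + (α - β) + β + 1 := by linarith
  have q1 : 0 < (j:ℝ) + 1 + (β-1) + 1 := by linarith
  have q2 : 0 < (j:ℝ) + 1 + (α - β - 1) + 1 := by linarith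
  have q3 : 0 < (j:ℝ) + 1 + 1 := by linarith
  have q4 : 0 < (j:ℝ) + 1 + (β-1) + (α-β-1) + 1 := by linarith
  have q5 : 0 < 2*((j:ℝ)+1) + (β-1) + (α-β-1) + 1 := by linarith
  have g1 := Real.Gamma_pos_of_pos p1
  have g2 := Real.Gamma_pos_of_pos p2
  have g3 := Real.Gamma_pos_of_pos p3
  have g4 := Real.Gamma_pos_of_pos p4
  have h1 := Real.Gamma_pos_of_pos q1
  have h2 := Real.Gamma_pos_of_pos q2
  have h3 := Real.Gamma_pos_of_pos q3
  have h4 := Real.Gamma_pos_of_pos q4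
  have hA : GNormVal j (α - β) β ^ 2 =
      Real.Gamma ((j:ℝ) + (α-β) + 1) * Real.Gamma ((j:ℝ) + β + 1) /
        ((2*(j:ℝ) + (α-β) + β + 1) * Real.Gamma ((j:ℝ) + 1) * Real.Gamma ((j:ℝ) + (α-β) + β + 1)) := by
    unfold GNormVal
    rw [sq_sqrt (by positivity)]
  have hB : GNormVal (j+1) (β-1) (α-β-1) ^ 2 =
      Real.Gamma ((j:ℝ) + 1 + (β-1) + 1) * Real.Gamma ((j:ℝ) + 1 + (α-β-1) + 1) /
        ((2*((j:ℝ)+1) + (β-1) + (α-β-1) + 1) * Real.Gamma ((j:ℝ) + 1 + 1) *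
          Real.Gamma ((j:ℝ) + 1 + (β-1) + (α-β-1) + 1)) := by
    unfold GNormVal
    push_cast
    rw [sq_sqrt (by positivity)]
  -- rewrite Gamma arguments to common forms
  have e1 : Real.Gamma ((j:ℝ) + 1 + (β-1) + 1) = Real.Gamma ((j:ℝ) + β + 1) := by ring_nf
  have e2 : Real.Gamma ((j:ℝ) + 1 + (α-β-1) + 1) = Real.Gamma ((j:ℝ) + (α-β) + 1) := by ring_nf
  have e3 : Real.Gamma ((j:ℝ) + 1 + (β-1) + (α-β-1) + 1) = Real.Gamma ((j:ℝ) + α) := by ring_nf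
  have e4 : Real.Gamma ((j:ℝ) + (α-β) + β + 1) = ((j:ℝ) + α) * Real.Gamma ((j:ℝ) + α) := by
    have : (j:ℝ) + (α-β) + β + 1 = ((j:ℝ) + α) + 1 := by ring
    rw [this, Real.Gamma_add_one (by positivity)]
  have e5 : Real.Gamma ((j:ℝ) + 1 + 1) = ((j:ℝ) + 1) * Real.Gamma ((j:ℝ) + 1) := by
    rw [Real.Gamma_add_one (by positivity)]
  have hαpos : (0:ℝ) < (j:ℝ) + α := by linarith
  have gα : 0 < Real.Gamma ((j:ℝ) + α) := Real.Gamma_pos_of_pos hαpos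
  have key : GNormVal j (α - β) β ^ 2 / GNormVal (j + 1) (β - 1) (α - β - 1) ^ 2 =
      ((j : ℝ) + 1) / ((j : ℝ) + α) := by
    rw [hA, hB, e1, e2, e3, e4, e5]
    have n1 := g1.ne'
    have n2 := g2.ne'
    have n3 := g3.ne'
    have nα := gα.ne'
    have n5 : (2*(j:ℝ) + (α - β) + β + 1) ≠ 0 := p5.ne'
    have n6 : (2*((j:ℝ)+1) + (β-1) + (α-β-1) + 1) ≠ 0 := q5.ne'
    have n7 : (1 + (j:ℝ)*2 + α) ≠ 0 := (by linarith : (0:ℝ) < 1 + (j:ℝ)*2 + α).ne'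
    field_simp
    ring_nf
    field_simp
    ring
  refine ⟨key, ?_, ?_⟩
  · rw [key]
    rw [div_le_div_iff₀ (by norm_num) hαpos]
    linarith
  · rw [key]
    rw [div_le_one hαpos]
    linarith
end

section
/- Let 1<α<2 and 0≤r≤1. Then there exists a unique β ∈ [α−1,1] such that r = sin(πβ) / ( sin(π(α−β)) + sin(πβ) ); moreover sin(π(α−β)) + sin(πβ) > 0 for every β ∈ [α−1,1]. -/
open MeasureTheory Real Filter

/-- existence and uniqueness of β solving r = sin(πβ)/(sin(π(α-β)) + sin(πβ)),
and positivity of the denominator. -/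
theorem stmt5 (α r : ℝ) (hα : 1 < α ∧ α < 2) (hr : 0 ≤ r ∧ r ≤ 1) :
    (∃! β : ℝ, β ∈ Set.Icc (α - 1) 1 ∧
        r = Real.sin (π * β) / (Real.sin (π * (α - β)) + Real.sin (π * β))) ∧
      ∀ β ∈ Set.Icc (α - 1) 1, 0 < Real.sin (π * (α - β)) + Real.sin (π * β) := by

  obtain ⟨hα1, hα2⟩ := hα
  obtain ⟨hr0, hr1⟩ := hr
  have hpi := Real.pi_pos
  set D : ℝ → ℝ := fun β => Real.sin (π * (α - β)) + Real.sin (π * β) with hDdef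
  have hpos : ∀ β ∈ Set.Icc (α - 1) 1, 0 < D β := by
    intro β hβ
    obtain ⟨h1, h2⟩ := hβ
    have hβ0 : 0 < β := by linarith
    have hs1 : 0 ≤ Real.sin (π * (α - β)) :=
      Real.sin_nonneg_of_nonneg_of_le_pi (by nlinarith) (by nlinarith)
    have hs2 : 0 ≤ Real.sin (π * β) :=
      Real.sin_nonneg_of_nonneg_of_le_pi (by nlinarith) (by nlinarith)
    rcases lt_or_eq_of_le h2 with h | h
    · have : 0 < Real.sin (π * β) :=
        Real.sin_pos_of_pos_of_lt_pi (by nlinarith) (by nlinarith)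
      simp only [hDdef]; linarith
    · subst h
      have : 0 < Real.sin (π * (α - 1)) :=
        Real.sin_pos_of_pos_of_lt_pi (by nlinarith) (by nlinarith)
      simp only [hDdef]; linarith
  set g : ℝ → ℝ := fun β => Real.sin (π * β) / D β with hgdef
  have hcont : ContinuousOn g (Set.Icc (α - 1) 1) := by
    apply ContinuousOn.div
    · exact (Real.continuous_sin.comp (continuous_const.mul continuous_id)).continuousOn
    · exact ((Real.continuous_sin.comp (continuous_const.mul (continuous_const.sub continuous_id))).add
        (Real.continuous_sin.comp (continuous_const.mul continuous_id))).continuousOn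
    · exact fun x hx => (hpos x hx).ne'
  have hsinα : Real.sin (π * α) < 0 := by
    have h1 : 0 < Real.sin (π * (α - 1)) :=
      Real.sin_pos_of_pos_of_lt_pi (by nlinarith) (by nlinarith)
    have h2 : Real.sin (π * α) = -Real.sin (π * (α - 1)) := by
      rw [show π * α = π * (α - 1) + π by ring, Real.sin_add_pi]
    linarith
  have hkey : ∀ x ∈ Set.Ioo (α - 1) 1,
      HasDerivAt g (π * Real.sin (π * α) / (D x) ^ 2) x := by
    intro x hx
    have hDx : D x ≠ 0 := (hpos x (Set.mem_Icc_of_Ioo hx)).ne'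
    have hu : HasDerivAt (fun y : ℝ => Real.sin (π * y)) (Real.cos (π * x) * π) x := by
      have h1 : HasDerivAt (fun y : ℝ => π * y) π x := by
        simpa using (hasDerivAt_id x).const_mul π
      exact (Real.hasDerivAt_sin (π * x)).comp x h1
    have hv : HasDerivAt (fun y : ℝ => Real.sin (π * (α - y))) (Real.cos (π * (α - x)) * (-π)) x := by
      have h1 : HasDerivAt (fun y : ℝ => π * (α - y)) (-π) x := by
        simpa using ((hasDerivAt_id x).const_sub α).const_mul π
      exact (Real.hasDerivAt_sin (π * (α - x))).comp x h1
    have hD' : HasDerivAt D (Real.cos (π * (α - x)) * (-π) + Real.cos (π * x) * π) x := hv.add hu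
    have h := hu.div hD' hDx
    refine h.congr_deriv ?_
    have hsum : Real.sin (π * α) = Real.sin (π * (α - x) + π * x) := by ring_nf
    rw [hsum, Real.sin_add]
    simp only [hDdef]
    field_simp
    ring
  have hanti : StrictAntiOn g (Set.Icc (α - 1) 1) := by
    apply StrictAntiOn.mono _ (le_refl (Set.Icc (α - 1) 1))
    apply strictAntiOn_of_deriv_neg (convex_Icc _ _) hcont
    intro x hx
    rw [interior_Icc] at hx
    rw [(hkey x hx).deriv]
    have := hpos x (Set.mem_Icc_of_Ioo hx)
    have h2 : 0 < (D x) ^ 2 := by positivity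
    exact div_neg_of_neg_of_pos (by nlinarith) h2
  have hmem_a : (α - 1) ∈ Set.Icc (α - 1) 1 := ⟨le_refl _, by linarith⟩
  have hmem_1 : (1 : ℝ) ∈ Set.Icc (α - 1) 1 := ⟨by linarith, le_refl _⟩
  have hga : g (α - 1) = 1 := by
    have h0 : Real.sin (π * (α - (α - 1))) = 0 := by
      rw [show π * (α - (α - 1)) = π by ring, Real.sin_pi]
    have h1 : 0 < Real.sin (π * (α - 1)) :=
      Real.sin_pos_of_pos_of_lt_pi (by nlinarith) (by nlinarith)
    simp only [hgdef, hDdef, h0, zero_add]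
    exact div_self h1.ne'
  have hg1 : g 1 = 0 := by
    have h0 : Real.sin (π * (1 : ℝ)) = 0 := by rw [mul_one, Real.sin_pi]
    simp only [hgdef, h0, zero_div]
  constructor
  · have hivt := intermediate_value_Icc' (by linarith : α - 1 ≤ (1:ℝ)) hcont
    have hrmem : r ∈ Set.Icc (g 1) (g (α - 1)) := by rw [hg1, hga]; exact ⟨hr0, hr1⟩
    obtain ⟨β, hβmem, hgβ⟩ := hivt hrmem
    refine ⟨β, ⟨hβmem, ?_⟩, ?_⟩
    · simp only [hgdef, hDdef] at hgβ; exact hgβ.symm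
    · rintro y ⟨hymem, hy⟩
      apply hanti.injOn hymem hβmem
      simp only [hgdef, hDdef]
      rw [← hy]
      simp only [hgdef, hDdef] at hgβ
      rw [hgβ]
  · intro β hβ
    exact hpos β hβ
end

section
/- Let 1<α<2, α−1<β<1, set λ_j := ( sin(πα)/( sin(π(α−β)) + sin(πβ) ) )·Γ(j+α)/j!. Let K:[0,1]→ℝ be measurable with 0<K_m≤K(x)≤K_M and let f:(0,1)→ℝ be measurable with ‖f‖_{ω^{(β,α−β)}} < ∞; define f₁, f₂, the coefficients f_{k,j}, A, and c_j as in the context. Then for all M > N ≥ 0: Σ_{i=N+1}^M c_i²·|‖G_i^{(α−β,β)}‖|² ≤ (2/λ₀²)·Σ_{i=N+1}^M ( f_{1,i+1}² + A²·f_{2,i+1}² )·|‖G_{i+1}^{(β−1,α−β−1)}‖|². -/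
open MeasureTheory Real Filter

lemma auxkey (L0 L R S P Q : ℝ) (hL0 : 0 < L0 ^ 2) (hL : L0 ^ 2 ≤ L ^ 2)
    (hR : 0 ≤ R) (hRS : R ≤ S) :
    ((-P + Q) / L) ^ 2 * R ≤ 2 / L0 ^ 2 * ((P ^ 2 + Q ^ 2) * S) := by
  have hS : 0 ≤ S := hR.trans hRS
  have hL2 : 0 < L ^ 2 := lt_of_lt_of_le hL0 hL
  have key : (-P + Q) ^ 2 ≤ 2 * (P ^ 2 + Q ^ 2) := by nlinarith [sq_nonneg (P + Q)]
  have hab : (-P + Q) ^ 2 * R ≤ 2 * (P ^ 2 + Q ^ 2) * S := by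
    nlinarith [mul_le_mul_of_nonneg_right key hR,
      mul_le_mul_of_nonneg_left hRS (by positivity : (0:ℝ) ≤ 2 * (P ^ 2 + Q ^ 2))]
  calc ((-P + Q) / L) ^ 2 * R = (-P + Q) ^ 2 * R / L ^ 2 := by rw [div_pow]; ring
    _ ≤ 2 * (P ^ 2 + Q ^ 2) * S / L0 ^ 2 :=
        div_le_div₀ (by positivity) hab hL0 hL
    _ = 2 / L0 ^ 2 * ((P ^ 2 + Q ^ 2) * S) := by ring

lemma gnorm_le (α β : ℝ) (hα1 : 1 < α) (hβ1 : α - 1 < β) (hβ2 : β < 1) (i : ℕ) :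
    GNormVal i (α - β) β ^ 2 ≤ GNormVal (i + 1) (β - 1) (α - β - 1) ^ 2 := by
  have hx : (0:ℝ) ≤ (i:ℝ) := Nat.cast_nonneg i
  set x : ℝ := (i:ℝ) with hxdef
  have hg1 : 0 < Real.Gamma (x + (α - β) + 1) := Real.Gamma_pos_of_pos (by linarith)
  have hg2 : 0 < Real.Gamma (x + β + 1) := Real.Gamma_pos_of_pos (by linarith)
  have hg3 : 0 < Real.Gamma (x + 1) := Real.Gamma_pos_of_pos (by linarith)
  have hg4 : 0 < Real.Gamma (x + α) := Real.Gamma_pos_of_pos (by linarith)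
  have hc : 0 < 2 * x + α + 1 := by linarith
  have hxα : x + α ≠ 0 := by linarith
  have hx1 : x + 1 ≠ 0 := by linarith
  have cast1 : ((i + 1 : ℕ) : ℝ) = x + 1 := by push_cast; ring
  have eA : Real.Gamma (x + (α - β) + β + 1) = (x + α) * Real.Gamma (x + α) := by
    rw [show x + (α - β) + β + 1 = (x + α) + 1 by ring, Real.Gamma_add_one hxα]
  have eB : Real.Gamma (x + 1 + 1) = (x + 1) * Real.Gamma (x + 1) := Real.Gamma_add_one hx1
  have e1 : x + 1 + (β - 1) + 1 = x + β + 1 := by ring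
  have e2 : x + 1 + (α - β - 1) + 1 = x + (α - β) + 1 := by ring
  have e3 : x + 1 + (β - 1) + (α - β - 1) + 1 = x + α := by ring
  have L1 : GNormVal i (α - β) β ^ 2 =
      Real.Gamma (x + (α - β) + 1) * Real.Gamma (x + β + 1) /
        ((2 * x + α + 1) * Real.Gamma (x + 1) * ((x + α) * Real.Gamma (x + α))) := by
    rw [GNormVal, show 2 * x + (α - β) + β + 1 = 2 * x + α + 1 by ring, eA]
    exact Real.sq_sqrt (by positivity)
  have L2 : GNormVal (i + 1) (β - 1) (α - β - 1) ^ 2 =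
      Real.Gamma (x + β + 1) * Real.Gamma (x + (α - β) + 1) /
        ((2 * x + α + 1) * ((x + 1) * Real.Gamma (x + 1)) * Real.Gamma (x + α)) := by
    rw [GNormVal, cast1, e1, e2, e3,
      show 2 * (x + 1) + (β - 1) + (α - β - 1) + 1 = 2 * x + α + 1 by ring, eB]
    exact Real.sq_sqrt (by positivity)
  rw [L1, L2, div_le_div_iff₀ (by positivity) (by positivity)]
  nlinarith [mul_pos (mul_pos (mul_pos (mul_pos hg1 hg2) hc) hg3) hg4, hα1]

lemma gamma_fact (α : ℝ) (hα : 1 ≤ α) (i : ℕ) :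
    Real.Gamma α * (Nat.factorial i : ℝ) ≤ Real.Gamma ((i : ℝ) + α) := by
  induction i with
  | zero => simp
  | succ n ih =>
    have hn : (0:ℝ) ≤ (n:ℝ) := Nat.cast_nonneg n
    have h1 : Real.Gamma (((n + 1 : ℕ) : ℝ) + α) = ((n:ℝ) + α) * Real.Gamma ((n:ℝ) + α) := by
      rw [show ((n + 1 : ℕ) : ℝ) + α = ((n:ℝ) + α) + 1 by push_cast; ring,
        Real.Gamma_add_one (by linarith)]
    have hΓ : 0 < Real.Gamma α := Real.Gamma_pos_of_pos (by linarith)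
    have hfac : (0:ℝ) < (Nat.factorial n : ℝ) := by positivity
    rw [h1, Nat.factorial_succ]
    push_cast
    have step : ((n:ℝ) + 1) * (Real.Gamma α * (Nat.factorial n : ℝ)) ≤
        ((n:ℝ) + α) * (Real.Gamma α * (Nat.factorial n : ℝ)) :=
      mul_le_mul_of_nonneg_right (by linarith) (by positivity)
    nlinarith [mul_le_mul_of_nonneg_left ih (by linarith : (0:ℝ) ≤ (n:ℝ) + α)]

lemma lam_facts (α β : ℝ) (hα1 : 1 < α) (hα2 : α < 2) (hβ1 : α - 1 < β) (hβ2 : β < 1) :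
    0 < lamCoef α β 0 ^ 2 ∧ ∀ i : ℕ, lamCoef α β 0 ^ 2 ≤ lamCoef α β i ^ 2 := by
  have hπ := Real.pi_pos
  have hsin1 : Real.sin (π * α) < 0 := by
    have : Real.sin (π * α) = -Real.sin (π * (α - 1)) := by
      rw [show π * α = π * (α - 1) + π by ring, Real.sin_add_pi]
    rw [this, neg_neg_iff_pos]
    exact Real.sin_pos_of_pos_of_lt_pi (by nlinarith) (by nlinarith)
  have hsin2 : 0 < Real.sin (π * (α - β)) :=
    Real.sin_pos_of_pos_of_lt_pi (by nlinarith) (by nlinarith)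
  have hsin3 : 0 < Real.sin (π * β) :=
    Real.sin_pos_of_pos_of_lt_pi (by nlinarith) (by nlinarith)
  set C : ℝ := Real.sin (π * α) / (Real.sin (π * (α - β)) + Real.sin (π * β)) with hC
  have hCneg : C < 0 := div_neg_of_neg_of_pos hsin1 (by linarith)
  have hΓα : 0 < Real.Gamma α := Real.Gamma_pos_of_pos (by linarith)
  have h0 : lamCoef α β 0 = C * Real.Gamma α := by
    simp [lamCoef, Nat.factorial, hC]
  constructor
  · rw [h0]
    have : C * Real.Gamma α ≠ 0 := mul_ne_zero hCneg.ne hΓα.ne'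
    positivity
  · intro i
    have habs : |lamCoef α β 0| ≤ |lamCoef α β i| := by
      rw [h0, lamCoef, abs_div, abs_mul, abs_mul]
      have hΓi : 0 < Real.Gamma ((i:ℝ) + α) := Real.Gamma_pos_of_pos (by positivity)
      have hfac : (0:ℝ) < (Nat.factorial i : ℝ) := by positivity
      rw [abs_of_pos hΓα, abs_of_pos hΓi, abs_of_pos hfac, le_div_iff₀ hfac]
      have := gamma_fact α (le_of_lt hα1) i
      nlinarith [abs_nonneg C]
    calc lamCoef α β 0 ^ 2 = |lamCoef α β 0| ^ 2 := (sq_abs _).symm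
      _ ≤ |lamCoef α β i| ^ 2 := pow_le_pow_left₀ (abs_nonneg _) habs 2
      _ = lamCoef α β i ^ 2 := sq_abs _

/-- tail estimate for the spectral coefficients of the solution. -/
theorem stmt9 (α β Km KM : ℝ) (hα : 1 < α ∧ α < 2) (hβ : α - 1 < β ∧ β < 1)
    (K f : ℝ → ℝ) (hKmeas : Measurable K) (hKm : 0 < Km)
    (hK : ∀ x ∈ Set.Icc (0:ℝ) 1, Km ≤ K x ∧ K x ≤ KM)
    (hf : Measurable f)
    (hfin : IntervalIntegrable (fun x => jw β (α - β) x * f x ^ 2) MeasureTheory.volume 0 1) :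
    ∀ M N : ℕ, N < M →
      ∑ i ∈ Finset.Ioc N M, cCoef α β K f i ^ 2 * GNormVal i (α - β) β ^ 2 ≤
        (2 / lamCoef α β 0 ^ 2) *
          ∑ i ∈ Finset.Ioc N M,
            (fCoef α β K f 1 (i + 1) ^ 2 + Aconst α β K f ^ 2 * fCoef α β K f 2 (i + 1) ^ 2) *
              GNormVal (i + 1) (β - 1) (α - β - 1) ^ 2 := by
  intro M N hNM
  obtain ⟨hl0, hli⟩ := lam_facts α β hα.1 hα.2 hβ.1 hβ.2
  rw [Finset.mul_sum]
  apply Finset.sum_le_sum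
  intro i _
  have h := auxkey (lamCoef α β 0) (lamCoef α β i) (GNormVal i (α - β) β ^ 2)
    (GNormVal (i + 1) (β - 1) (α - β - 1) ^ 2) (fCoef α β K f 1 (i + 1))
    (Aconst α β K f * fCoef α β K f 2 (i + 1)) hl0 (hli i) (sq_nonneg _)
    (gnorm_le α β hα.1 hβ.1 hβ.2 i)
  simpa only [cCoef, mul_pow] using h
end

section
/- Let 1<α<2 and α−1<β<1. Then there exists a constant C > 0, depending only on α, β, K_m, K_M, such that for every measurable K:[0,1]→ℝ with 0<K_m≤K(x)≤K_M and every measurable f:(0,1)→ℝ with ‖f‖_{ω^{(β,α−β)}} < ∞, the constant A := ( ∫₀¹ ω^{(β−1,α−β−1)}(x)·(1/K(x))·(∫₀^x f(y)dy) dx ) / ( ∫₀¹ ω^{(β−1,α−β−1)}(x)·(1/K(x)) dx ) satisfies |A| ≤ C·‖f‖_{ω^{(β,α−β)}}. -/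
open MeasureTheory Real Filter

lemma jw_meas (a b : ℝ) : Measurable (jw a b) := by
  have hpa : Measurable fun y : ℝ => y ^ a := by measurability
  have hpb : Measurable fun y : ℝ => y ^ b := by measurability
  unfold jw
  exact (hpa.comp (measurable_const.sub measurable_id)).mul hpb

lemma jw_nonneg (a b : ℝ) {x : ℝ} (hx : x ∈ Set.Icc (0:ℝ) 1) : 0 ≤ jw a b x :=
  mul_nonneg (Real.rpow_nonneg (by linarith [hx.2]) _) (Real.rpow_nonneg hx.1 _)

lemma jw_pos (a b : ℝ) {x : ℝ} (hx : x ∈ Set.Ioo (0:ℝ) 1) : 0 < jw a b x :=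
  mul_pos (Real.rpow_pos_of_pos (by linarith [hx.2]) _) (Real.rpow_pos_of_pos hx.1 _)

lemma jw_int (a b : ℝ) (ha : -1 < a) (hb : -1 < b) :
    IntegrableOn (jw a b) (Set.Ioc 0 1) volume := by
  have h2 : Set.Ioc (0:ℝ) (1/2) ∪ Set.Ioc (1/2:ℝ) 1 = Set.Ioc 0 1 :=
    Set.Ioc_union_Ioc_eq_Ioc (by norm_num) (by norm_num)
  rw [← h2]
  apply IntegrableOn.union
  · -- near 0
    have hint : IntegrableOn (fun x : ℝ => ((1/2:ℝ)^a + 1) * x ^ b) (Set.Ioc 0 (1/2)) volume := by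
      apply Integrable.const_mul
      exact (intervalIntegrable_iff_integrableOn_Ioc_of_le (by norm_num)).mp
        (intervalIntegral.intervalIntegrable_rpow' hb)
    refine Integrable.mono' hint ((jw_meas a b).aestronglyMeasurable) ?_
    rw [ae_restrict_iff' measurableSet_Ioc]
    refine Filter.Eventually.of_forall fun x hx => ?_
    have hx0 : 0 < x := hx.1
    have hx1 : x ≤ 1/2 := hx.2
    have h1x : (1:ℝ)/2 ≤ 1 - x := by linarith
    have h1x0 : (0:ℝ) < 1 - x := by linarith
    rw [Real.norm_eq_abs, abs_of_nonneg (jw_nonneg a b ⟨hx0.le, by linarith⟩)]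
    unfold jw
    have hxb : 0 ≤ x ^ b := Real.rpow_nonneg hx0.le _
    have key : (1 - x) ^ a ≤ (1/2:ℝ)^a + 1 := by
      rcases le_or_gt 0 a with h | h
      · have : (1-x)^a ≤ (1:ℝ)^a := Real.rpow_le_rpow h1x0.le (by linarith) h
        have h2 : (0:ℝ) < (1/2:ℝ)^a := Real.rpow_pos_of_pos (by norm_num) _
        simp only [Real.one_rpow] at this; linarith
      · have : (1-x)^a ≤ (1/2:ℝ)^a := Real.rpow_le_rpow_of_nonpos (by norm_num) h1x h.le
        linarith
    exact mul_le_mul_of_nonneg_right key hxb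
  · -- near 1
    have hint : IntegrableOn (fun x : ℝ => ((1/2:ℝ)^b + 1) * (1-x) ^ a) (Set.Ioc (1/2) 1) volume := by
      apply Integrable.const_mul
      apply (intervalIntegrable_iff_integrableOn_Ioc_of_le (by norm_num)).mp
      have := (intervalIntegral.intervalIntegrable_rpow' (a := 0) (b := 1/2) ha).comp_sub_left 1
      norm_num at this
      exact this.symm
    refine Integrable.mono' hint ((jw_meas a b).aestronglyMeasurable) ?_
    rw [ae_restrict_iff' measurableSet_Ioc]
    refine Filter.Eventually.of_forall fun x hx => ?_
    have hx0 : (1:ℝ)/2 < x := hx.1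
    have hx1 : x ≤ 1 := hx.2
    rw [Real.norm_eq_abs, abs_of_nonneg (jw_nonneg a b ⟨by linarith, hx1⟩)]
    unfold jw
    have h1xa : 0 ≤ (1-x) ^ a := Real.rpow_nonneg (by linarith) _
    have key : x ^ b ≤ (1/2:ℝ)^b + 1 := by
      rcases le_or_gt 0 b with h | h
      · have : x^b ≤ (1:ℝ)^b := Real.rpow_le_rpow (by linarith) hx1 h
        have h2 : (0:ℝ) < (1/2:ℝ)^b := Real.rpow_pos_of_pos (by norm_num) _
        simp only [Real.one_rpow] at this; linarith
      · have : x^b ≤ (1/2:ℝ)^b := Real.rpow_le_rpow_of_nonpos (by norm_num) hx0.le h.le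
        linarith
    calc (1-x)^a * x^b ≤ (1-x)^a * ((1/2:ℝ)^b + 1) := mul_le_mul_of_nonneg_left key h1xa
      _ = ((1/2:ℝ)^b + 1) * (1-x)^a := mul_comm _ _


/-- weighted AM-GM -/
lemma amgm (ε p q r : ℝ) (hε : 0 < ε) (hp : 0 < p) (hpq : p * q = 1) :
    |r| ≤ (ε * (p * r ^ 2) + ε⁻¹ * q) / 2 := by
  have key : p * (2 * ε * |r|) ≤ p * (ε ^ 2 * p * r ^ 2 + q) := by
    rcases abs_cases r with ⟨h1, _⟩ | ⟨h1, _⟩ <;> rw [h1] <;>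
      nlinarith [sq_nonneg (ε * p * r - 1), sq_nonneg (ε * p * r + 1), hp, hpq]
  have key2 : 2 * ε * |r| ≤ ε ^ 2 * p * r ^ 2 + q := le_of_mul_le_mul_left key hp
  rw [← mul_le_mul_iff_right₀ hε]
  have heq : ε * ((ε * (p * r ^ 2) + ε⁻¹ * q) / 2) = (ε ^ 2 * p * r ^ 2 + q) / 2 := by
    field_simp
  rw [heq]
  linarith

/-- bound on the constant A in terms of the weighted norm of f. -/
theorem stmt11 (α β Km KM : ℝ) (hα : 1 < α ∧ α < 2) (hβ : α - 1 < β ∧ β < 1)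
    (hKm : 0 < Km) (hKmM : Km ≤ KM) :
    ∃ C > 0, ∀ K f : ℝ → ℝ, Measurable K →
      (∀ x ∈ Set.Icc (0:ℝ) 1, Km ≤ K x ∧ K x ≤ KM) →
      Measurable f →
      IntervalIntegrable (fun x => jw β (α - β) x * f x ^ 2) MeasureTheory.volume 0 1 →
      |(∫ x in (0:ℝ)..1, jw (β - 1) (α - β - 1) x * (1 / K x) * ∫ y in (0:ℝ)..x, f y) /
          (∫ x in (0:ℝ)..1, jw (β - 1) (α - β - 1) x * (1 / K x))| ≤
        C * jwNorm β (α - β) f := by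
  obtain ⟨hα1, hα2⟩ := hα
  obtain ⟨hβ1, hβ2⟩ := hβ
  have hβ0 : 0 < β := by linarith
  have hvint : IntegrableOn (jw (-β) (β - α)) (Set.Ioc 0 1) volume :=
    jw_int _ _ (by linarith) (by linarith)
  have hwint : IntegrableOn (jw (β - 1) (α - β - 1)) (Set.Ioc 0 1) volume :=
    jw_int _ _ (by linarith) (by linarith)
  have hvII : IntervalIntegrable (jw (-β) (β - α)) volume 0 1 :=
    (intervalIntegrable_iff_integrableOn_Ioc_of_le zero_le_one).mpr hvint
  have hwII : IntervalIntegrable (jw (β - 1) (α - β - 1)) volume 0 1 :=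
    (intervalIntegrable_iff_integrableOn_Ioc_of_le zero_le_one).mpr hwint
  set I₂ := ∫ x in (0:ℝ)..1, jw (-β) (β - α) x with hI2def
  have hI2pos : 0 < I₂ :=
    intervalIntegral.intervalIntegral_pos_of_pos_on hvII (fun x hx => jw_pos _ _ hx) one_pos
  refine ⟨Real.sqrt I₂, Real.sqrt_pos.mpr hI2pos, ?_⟩
  intro K f hK hKb hf hfii
  have h01 : (0:ℝ) ≤ 1 := zero_le_one
  have hKpos : ∀ x ∈ Set.Icc (0:ℝ) 1, 0 < K x := fun x hx => lt_of_lt_of_le hKm (hKb x hx).1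
  have hS2nn : 0 ≤ ∫ x in (0:ℝ)..1, jw β (α - β) x * f x ^ 2 :=
    intervalIntegral.integral_nonneg h01 fun x hx =>
      mul_nonneg (jw_nonneg _ _ hx) (sq_nonneg _)
  set S := jwNorm β (α - β) f with hSdef
  have hS0 : 0 ≤ S := Real.sqrt_nonneg _
  have hSsq : S ^ 2 = ∫ x in (0:ℝ)..1, jw β (α - β) x * f x ^ 2 := by
    rw [hSdef, jwNorm]; exact Real.sq_sqrt hS2nn
  have hf2int : IntegrableOn (fun x => jw β (α - β) x * f x ^ 2) (Set.Ioc 0 1) volume :=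
    (intervalIntegrable_iff_integrableOn_Ioc_of_le h01).mp hfii
  have hIocIoo : volume.restrict (Set.Ioc (0:ℝ) 1) = volume.restrict (Set.Ioo (0:ℝ) 1) :=
    (Measure.restrict_congr_set Ioo_ae_eq_Ioc).symm
  have hIccIoo : volume.restrict (Set.Icc (0:ℝ) 1) = volume.restrict (Set.Ioo (0:ℝ) 1) :=
    (Measure.restrict_congr_set Ioo_ae_eq_Icc).symm
  have hne1 : ∀ᵐ x : ℝ ∂(volume.restrict (Set.Ioc (0:ℝ) 1)), x ∈ Set.Ioo (0:ℝ) 1 := by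
    rw [hIocIoo]; exact self_mem_ae_restrict measurableSet_Ioo
  have hprod1 : ∀ x ∈ Set.Ioo (0:ℝ) 1, jw β (α - β) x * jw (-β) (β - α) x = 1 := by
    intro x hx
    have h1 : (0:ℝ) < 1 - x := by linarith [hx.2]
    have h2 : (0:ℝ) < x := hx.1
    unfold jw
    rw [show (1-x)^β * x^(α-β) * ((1-x)^(-β) * x^(β-α)) =
      ((1-x)^β * (1-x)^(-β)) * (x^(α-β) * x^(β-α)) by ring,
      ← Real.rpow_add h1, ← Real.rpow_add h2,
      show β + -β = 0 by ring, show (α-β)+(β-α) = 0 by ring]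
    simp
  -- integrability of f
  have hfint : IntegrableOn f (Set.Ioc 0 1) volume := by
    refine Integrable.mono' (hf2int.add hvint) (hf.aestronglyMeasurable.restrict) ?_
    filter_upwards [hne1] with x hx
    have h := amgm 1 (jw β (α - β) x) (jw (-β) (β - α) x) (f x) one_pos
      (jw_pos _ _ hx) (hprod1 x hx)
    have hv0 : 0 ≤ jw (-β) (β - α) x := (jw_pos _ _ hx).le
    have hw0 : 0 ≤ jw β (α - β) x * f x ^ 2 :=
      mul_nonneg (jw_pos _ _ hx).le (sq_nonneg _)
    rw [Real.norm_eq_abs]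
    simp only [one_mul, inv_one] at h
    calc |f x| ≤ (jw β (α-β) x * f x ^ 2 + jw (-β) (β-α) x) / 2 := h
      _ ≤ jw β (α-β) x * f x ^ 2 + jw (-β) (β-α) x := by linarith
  have hfabs : IntegrableOn (fun x => |f x|) (Set.Ioc 0 1) volume := hfint.abs
  have habsII : IntervalIntegrable (fun x => |f x|) volume 0 1 :=
    (intervalIntegrable_iff_integrableOn_Ioc_of_le h01).mpr hfabs
  -- the key L¹ bound
  have hIf : ∫ x in (0:ℝ)..1, |f x| ≤ Real.sqrt I₂ * S := by
    rcases eq_or_lt_of_le hS0 with hS | hS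
    · -- S = 0
      have hint0 : ∫ x in (0:ℝ)..1, jw β (α - β) x * f x ^ 2 = 0 := by
        rw [← hSsq, ← hS]; norm_num
      rw [intervalIntegral.integral_of_le h01] at hint0
      have hnn_ae : 0 ≤ᵐ[volume.restrict (Set.Ioc (0:ℝ) 1)]
          fun x => jw β (α - β) x * f x ^ 2 := by
        filter_upwards [self_mem_ae_restrict measurableSet_Ioc] with x hx
        exact mul_nonneg (jw_nonneg _ _ (Set.Ioc_subset_Icc_self hx)) (sq_nonneg _)
      have hz := (integral_eq_zero_iff_of_nonneg_ae hnn_ae hf2int).mp hint0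
      have hfz : (fun x => |f x|) =ᵐ[volume.restrict (Set.Ioc (0:ℝ) 1)] 0 := by
        filter_upwards [hz, hne1] with x h0 hIoo
        have hp := jw_pos β (α - β) hIoo
        have h0' : jw β (α - β) x * f x ^ 2 = 0 := h0
        have hf2 : f x ^ 2 = 0 := by
          rcases mul_eq_zero.mp h0' with h | h
          · exact absurd h hp.ne'
          · exact h
        have hfx : f x = 0 := by
          have := sq_eq_zero_iff.mp hf2
          exact this
        simp [hfx]
      have : ∫ x in (0:ℝ)..1, |f x| = 0 := by
        rw [intervalIntegral.integral_of_le h01]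
        exact integral_eq_zero_of_ae hfz
      rw [this, ← hS, mul_zero]
  -- case 0 < S
    · set ε := Real.sqrt I₂ / S with hεdef
      have hsI2 : 0 < Real.sqrt I₂ := Real.sqrt_pos.mpr hI2pos
      have hε : 0 < ε := div_pos hsI2 hS
      have hptwise : ∀ᵐ x ∂(volume.restrict (Set.Icc (0:ℝ) 1)),
          |f x| ≤ (ε * (jw β (α-β) x * f x ^ 2) + ε⁻¹ * jw (-β) (β-α) x) / 2 := by
        rw [hIccIoo]
        filter_upwards [self_mem_ae_restrict measurableSet_Ioo] with x hx
        exact amgm ε _ _ _ hε (jw_pos _ _ hx) (hprod1 x hx)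
      have hRII : IntervalIntegrable
          (fun x => (ε * (jw β (α-β) x * f x ^ 2) + ε⁻¹ * jw (-β) (β-α) x) / 2) volume 0 1 :=
        ((hfii.const_mul ε).add (hvII.const_mul ε⁻¹)).div_const 2
      have h1 := intervalIntegral.integral_mono_ae_restrict h01 habsII hRII hptwise
      have h2 : ∫ x in (0:ℝ)..1,
          (ε * (jw β (α-β) x * f x ^ 2) + ε⁻¹ * jw (-β) (β-α) x) / 2
          = (ε * (∫ x in (0:ℝ)..1, jw β (α-β) x * f x ^ 2) + ε⁻¹ * I₂) / 2 := by
        rw [intervalIntegral.integral_div,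
          intervalIntegral.integral_add (hfii.const_mul ε) (hvII.const_mul ε⁻¹),
          intervalIntegral.integral_const_mul, intervalIntegral.integral_const_mul]
      have h3 : (ε * (∫ x in (0:ℝ)..1, jw β (α-β) x * f x ^ 2) + ε⁻¹ * I₂) / 2
          = Real.sqrt I₂ * S := by
        rw [← hSsq, hεdef]
        have hss : Real.sqrt I₂ * Real.sqrt I₂ = I₂ := Real.mul_self_sqrt hI2pos.le
        field_simp
        nlinarith [hss]
      rw [h2, h3] at h1
      exact h1
  -- bound on the primitive
  have hFb : ∀ x ∈ Set.Icc (0:ℝ) 1, |∫ y in (0:ℝ)..x, f y| ≤ Real.sqrt I₂ * S := by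
    intro x hx
    have h1 : |∫ y in (0:ℝ)..x, f y| ≤ ∫ y in (0:ℝ)..x, |f y| :=
      intervalIntegral.abs_integral_le_integral_abs hx.1
    have h2 : ∫ y in (0:ℝ)..x, |f y| ≤ ∫ y in (0:ℝ)..1, |f y| := by
      rw [intervalIntegral.integral_of_le hx.1, intervalIntegral.integral_of_le h01]
      refine setIntegral_mono_set hfabs ?_ (HasSubset.Subset.eventuallyLE (Set.Ioc_subset_Ioc_right hx.2))
      exact Filter.Eventually.of_forall fun x => abs_nonneg _
    linarith
  set M := Real.sqrt I₂ * S with hMdef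
  have hM0 : 0 ≤ M := mul_nonneg (Real.sqrt_nonneg _) hS0
  -- denominator facts
  have hDmeas : Measurable fun x => jw (β-1) (α-β-1) x * (1/K x) :=
    (jw_meas _ _).mul (measurable_const.div hK)
  have hDintOn : IntegrableOn (fun x => jw (β-1) (α-β-1) x * (1/K x)) (Set.Ioc 0 1) volume := by
    refine Integrable.mono' (hwint.const_mul Km⁻¹) hDmeas.aestronglyMeasurable.restrict ?_
    filter_upwards [self_mem_ae_restrict measurableSet_Ioc] with x hx
    have hxI : x ∈ Set.Icc (0:ℝ) 1 := Set.Ioc_subset_Icc_self hx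
    have hKx := hKpos x hxI
    have h1K : 1/K x ≤ 1/Km := one_div_le_one_div_of_le hKm (hKb x hxI).1
    have h1K0 : 0 ≤ 1/K x := by positivity
    rw [Real.norm_eq_abs, abs_of_nonneg (mul_nonneg (jw_nonneg _ _ hxI) h1K0)]
    calc jw (β-1) (α-β-1) x * (1/K x) ≤ jw (β-1) (α-β-1) x * (1/Km) :=
          mul_le_mul_of_nonneg_left h1K (jw_nonneg _ _ hxI)
      _ = Km⁻¹ * jw (β-1) (α-β-1) x := by rw [one_div]; ring
  have hDII : IntervalIntegrable (fun x => jw (β-1) (α-β-1) x * (1/K x)) volume 0 1 :=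
    (intervalIntegrable_iff_integrableOn_Ioc_of_le h01).mpr hDintOn
  have hDpos : 0 < ∫ x in (0:ℝ)..1, jw (β-1) (α-β-1) x * (1/K x) := by
    refine intervalIntegral.intervalIntegral_pos_of_pos_on hDII (fun x hx => ?_) one_pos
    have hKx := hKpos x (Set.Ioo_subset_Icc_self hx)
    exact mul_pos (jw_pos _ _ hx) (by positivity)
  -- numerator facts
  have hFcont : ContinuousOn (fun x => ∫ y in (0:ℝ)..x, f y) (Set.Icc 0 1) := by
    have hint : IntegrableOn f (Set.uIcc (0:ℝ) 1) volume := by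
      rw [Set.uIcc_of_le h01]
      exact (integrableOn_Icc_iff_integrableOn_Ioc).mpr hfint
    simpa [Set.uIcc_of_le h01] using intervalIntegral.continuousOn_primitive_interval hint
  have hNmeas : AEStronglyMeasurable
      (fun x => jw (β-1) (α-β-1) x * (1/K x) * ∫ y in (0:ℝ)..x, f y)
      (volume.restrict (Set.Ioc (0:ℝ) 1)) :=
    (hDmeas.aestronglyMeasurable.restrict).mul
      ((hFcont.mono Set.Ioc_subset_Icc_self).aestronglyMeasurable measurableSet_Ioc)
  have hNint : IntegrableOn
      (fun x => jw (β-1) (α-β-1) x * (1/K x) * ∫ y in (0:ℝ)..x, f y) (Set.Ioc 0 1) volume := by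
    refine Integrable.mono' (hwint.const_mul (Km⁻¹ * M)) hNmeas ?_
    filter_upwards [self_mem_ae_restrict measurableSet_Ioc] with x hx
    have hxI : x ∈ Set.Icc (0:ℝ) 1 := Set.Ioc_subset_Icc_self hx
    have hKx := hKpos x hxI
    have h1K : 1/K x ≤ 1/Km := one_div_le_one_div_of_le hKm (hKb x hxI).1
    have h1K0 : 0 ≤ 1/K x := by positivity
    have hw0 : 0 ≤ jw (β-1) (α-β-1) x := jw_nonneg _ _ hxI
    rw [Real.norm_eq_abs, abs_mul, abs_of_nonneg (mul_nonneg hw0 h1K0)]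
    calc jw (β-1) (α-β-1) x * (1/K x) * |∫ y in (0:ℝ)..x, f y|
        ≤ (1/Km) * jw (β-1) (α-β-1) x * M := by
          apply mul_le_mul
          · calc jw (β-1) (α-β-1) x * (1/K x) ≤ jw (β-1) (α-β-1) x * (1/Km) :=
                mul_le_mul_of_nonneg_left h1K hw0
              _ = (1/Km) * jw (β-1) (α-β-1) x := mul_comm _ _
          · exact hFb x hxI
          · exact abs_nonneg _
          · positivity
      _ = Km⁻¹ * M * jw (β-1) (α-β-1) x := by rw [one_div]; ring
  have hNII : IntervalIntegrable
      (fun x => jw (β-1) (α-β-1) x * (1/K x) * ∫ y in (0:ℝ)..x, f y) volume 0 1 :=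
    (intervalIntegrable_iff_integrableOn_Ioc_of_le h01).mpr hNint
  have hNle : |∫ x in (0:ℝ)..1, jw (β-1) (α-β-1) x * (1/K x) * ∫ y in (0:ℝ)..x, f y|
      ≤ M * ∫ x in (0:ℝ)..1, jw (β-1) (α-β-1) x * (1/K x) := by
    calc |∫ x in (0:ℝ)..1, jw (β-1) (α-β-1) x * (1/K x) * ∫ y in (0:ℝ)..x, f y|
        ≤ ∫ x in (0:ℝ)..1, |jw (β-1) (α-β-1) x * (1/K x) * ∫ y in (0:ℝ)..x, f y| :=
          intervalIntegral.abs_integral_le_integral_abs h01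
      _ ≤ ∫ x in (0:ℝ)..1, M * (jw (β-1) (α-β-1) x * (1/K x)) := by
          refine intervalIntegral.integral_mono_on h01 hNII.abs (hDII.const_mul M) fun x hx => ?_
          have hKx := hKpos x hx
          have h1K0 : 0 ≤ 1/K x := by positivity
          have hw0 : 0 ≤ jw (β-1) (α-β-1) x := jw_nonneg _ _ hx
          rw [abs_mul, abs_of_nonneg (mul_nonneg hw0 h1K0)]
          calc jw (β-1) (α-β-1) x * (1/K x) * |∫ y in (0:ℝ)..x, f y|
              ≤ jw (β-1) (α-β-1) x * (1/K x) * M :=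
                mul_le_mul_of_nonneg_left (hFb x hx) (mul_nonneg hw0 h1K0)
            _ = M * (jw (β-1) (α-β-1) x * (1/K x)) := mul_comm _ _
      _ = M * ∫ x in (0:ℝ)..1, jw (β-1) (α-β-1) x * (1/K x) :=
          intervalIntegral.integral_const_mul _ _
  rw [abs_div, abs_of_pos hDpos, div_le_iff₀ hDpos]
  calc |∫ x in (0:ℝ)..1, jw (β-1) (α-β-1) x * (1/K x) * ∫ y in (0:ℝ)..x, f y|
      ≤ M * ∫ x in (0:ℝ)..1, jw (β-1) (α-β-1) x * (1/K x) := hNle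
    _ = Real.sqrt I₂ * S * ∫ x in (0:ℝ)..1, jw (β-1) (α-β-1) x * (1/K x) := by rw [hMdef]
end

section
/- Let 1<α<2, α−1<β<1, set λ_j := ( sin(πα)/( sin(π(α−β)) + sin(πβ) ) )·Γ(j+α)/j!; let K:[0,1]→ℝ be measurable with 0<K_m≤K(x)≤K_M, let f:(0,1)→ℝ be measurable with ‖f‖_{ω^{(β,α−β)}} < ∞, and define f₁, f₂, the coefficients f_{k,j}, A, and c_j as in the context. Let j ∈ ℕ, j ≥ 1, and suppose for k = 1, 2 that Σ_{i=j}^∞ f_{k,i}²·( Γ(i+j+α−1)/Γ(i+α−1) )²·|‖G_{i−j}^{(β+j−1,α−β+j−1)}‖|² < ∞ (which says that the j-th derivative of f_k lies in L²_{ω^{(β+j−1,α−β+j−1)}}). Then Σ_{i=j}^∞ c_i²·( Γ(i+j+α+1)/Γ(i+α+1) )²·|‖G_{i−j}^{(α−β+j,β+j)}‖|² < ∞ (which says that the j-th derivative of u/ω^{(α−β,β)} lies in L²_{ω^{(α−β+j,β+j)}}). -/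
open MeasureTheory Real Filter

lemma alg_key (α M J D P Q R S T U V : ℝ) (hα1 : 1 < α) (hα2 : α < 2)
    (hM : 0 ≤ M) (hJ : 1 ≤ J) (hDp : 0 < D) (hPp : 0 < P) (hQp : 0 < Q) (hRp : 0 < R)
    (hSp : 0 < S) (hTp : 0 < T) (hUp : 0 < U) (hVp : 0 < V) (hVQ : V ≤ Q) :
    ((M + J + J + α) * P / ((M + J + α) * Q)) ^ 2 *
      (R * S / (D * U * ((α + J + J + M) * T))) * V ^ 2
    ≤ 2 * ((P / Q) ^ 2 * (S * R / (D * ((M + 1) * U) * T))) * Q ^ 2 := by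
  have hQa : (0:ℝ) < M + J + α := by linarith
  have hfin : (M + J + J + α) * (M + 1) * V ^ 2 ≤ 2 * (M + J + α) ^ 2 * Q ^ 2 := by
    have h1 : V ^ 2 ≤ Q ^ 2 := by nlinarith
    have h2 : (M + J + J + α) * (M + 1) ≤ 2 * (M + J + α) ^ 2 := by nlinarith
    calc (M + J + J + α) * (M + 1) * V ^ 2 ≤ 2 * (M + J + α) ^ 2 * V ^ 2 :=
          mul_le_mul_of_nonneg_right h2 (sq_nonneg V)
      _ ≤ 2 * (M + J + α) ^ 2 * Q ^ 2 := mul_le_mul_of_nonneg_left h1 (by positivity)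
  have eL : ((M + J + J + α) * P / ((M + J + α) * Q)) ^ 2 *
      (R * S / (D * U * ((α + J + J + M) * T))) * V ^ 2 =
      (P ^ 2 * R * S / (D * U * T * (M + J + α) ^ 2 * Q ^ 2 * (M + 1))) *
        ((M + J + J + α) * (M + 1) * V ^ 2) := by
    field_simp
    ring
  have eR : 2 * ((P / Q) ^ 2 * (S * R / (D * ((M + 1) * U) * T))) * Q ^ 2 =
      (P ^ 2 * R * S / (D * U * T * (M + J + α) ^ 2 * Q ^ 2 * (M + 1))) *
        (2 * (M + J + α) ^ 2 * Q ^ 2) := by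
    field_simp
  rw [eL, eR]
  exact mul_le_mul_of_nonneg_left hfin (by positivity)

lemma key (α β : ℝ) (hα1 : 1 < α) (hα2 : α < 2) (hβ1 : α - 1 < β) (hβ2 : β < 1)
    (m j : ℕ) (hj : 1 ≤ j) :
    (Real.Gamma ((m:ℝ) + j + j + α + 1) / Real.Gamma ((m:ℝ) + j + α + 1)) ^ 2 *
      GNormVal m (α - β + j) (β + j) ^ 2 * Real.Gamma ((m:ℝ) + j + 1) ^ 2
    ≤ 2 * ((Real.Gamma ((m:ℝ) + 1 + j + j + α - 1) / Real.Gamma ((m:ℝ) + 1 + j + α - 1)) ^ 2 *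
      GNormVal (m + 1) (β + j - 1) (α - β + j - 1) ^ 2) * Real.Gamma ((m:ℝ) + j + α) ^ 2 := by
  have hM : (0:ℝ) ≤ (m:ℝ) := Nat.cast_nonneg m
  have hJ : (1:ℝ) ≤ (j:ℝ) := by exact_mod_cast hj
  set M := (m:ℝ) with hMdef
  set J := (j:ℝ) with hJdef
  have hPa : (0:ℝ) < M + J + J + α := by linarith
  have hQa : (0:ℝ) < M + J + α := by linarith
  have hRa : (0:ℝ) < M + (α - β + J) + 1 := by linarith
  have hSa : (0:ℝ) < M + (β + J) + 1 := by linarith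
  have hTa : (0:ℝ) < α + J + J + M := by linarith
  have hUa : (0:ℝ) < M + 1 := by linarith
  have hVa : (0:ℝ) < M + J + 1 := by linarith
  have hDa : (0:ℝ) < 2 * M + (α - β + J) + (β + J) + 1 := by linarith
  have hin1 : (0:ℝ) ≤ Real.Gamma (M + (α - β + J) + 1) * Real.Gamma (M + (β + J) + 1) /
      ((2 * M + (α - β + J) + (β + J) + 1) * Real.Gamma (M + 1) *
        Real.Gamma (M + (α - β + J) + (β + J) + 1)) := by
    have := Real.Gamma_pos_of_pos hRa
    have := Real.Gamma_pos_of_pos hSa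
    have := Real.Gamma_pos_of_pos hUa
    have hx : (0:ℝ) < M + (α - β + J) + (β + J) + 1 := by linarith
    have := Real.Gamma_pos_of_pos hx
    positivity
  have hin2 : (0:ℝ) ≤ Real.Gamma ((↑(m+1):ℝ) + (β + J - 1) + 1) *
      Real.Gamma ((↑(m+1):ℝ) + (α - β + J - 1) + 1) /
      ((2 * (↑(m+1):ℝ) + (β + J - 1) + (α - β + J - 1) + 1) * Real.Gamma ((↑(m+1):ℝ) + 1) *
        Real.Gamma ((↑(m+1):ℝ) + (β + J - 1) + (α - β + J - 1) + 1)) := by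
    push_cast
    have h1 : (0:ℝ) < M + 1 + (β + J - 1) + 1 := by linarith
    have h2 : (0:ℝ) < M + 1 + (α - β + J - 1) + 1 := by linarith
    have h3 : (0:ℝ) < M + 1 + 1 := by linarith
    have h4 : (0:ℝ) < M + 1 + (β + J - 1) + (α - β + J - 1) + 1 := by linarith
    have := Real.Gamma_pos_of_pos h1
    have := Real.Gamma_pos_of_pos h2
    have := Real.Gamma_pos_of_pos h3
    have := Real.Gamma_pos_of_pos h4
    have h5 : (0:ℝ) < 2 * (M + 1) + (β + J - 1) + (α - β + J - 1) + 1 := by linarith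
    positivity
  rw [GNormVal, GNormVal, Real.sq_sqrt hin1, Real.sq_sqrt hin2]
  push_cast
  rw [show M + J + J + α + 1 = (M + J + J + α) + 1 by ring,
    Real.Gamma_add_one hPa.ne',
    show M + J + α + 1 = (M + J + α) + 1 by ring,
    Real.Gamma_add_one hQa.ne',
    show M + (α - β + J) + (β + J) + 1 = (α + J + J + M) + 1 by ring,
    Real.Gamma_add_one hTa.ne',
    show M + 1 + (β + J - 1) + 1 = M + (β + J) + 1 by ring,
    show M + 1 + (α - β + J - 1) + 1 = M + (α - β + J) + 1 by ring,
    show 2 * (M + 1) + (β + J - 1) + (α - β + J - 1) + 1 = 2 * M + (α - β + J) + (β + J) + 1 by ring,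
    show M + 1 + (β + J - 1) + (α - β + J - 1) + 1 = α + J + J + M by ring,
    show M + 1 + 1 = (M + 1) + 1 by ring,
    Real.Gamma_add_one hUa.ne',
    show M + 1 + J + J + α - 1 = M + J + J + α by ring,
    show M + 1 + J + α - 1 = M + J + α by ring]
  exact alg_key α M J _ _ _ _ _ _ _ _ hα1 hα2 hM hJ hDa
    (Real.Gamma_pos_of_pos hPa) (Real.Gamma_pos_of_pos hQa) (Real.Gamma_pos_of_pos hRa)
    (Real.Gamma_pos_of_pos hSa) (Real.Gamma_pos_of_pos hTa) (Real.Gamma_pos_of_pos hUa)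
    (Real.Gamma_pos_of_pos hVa)
    (Real.Gamma_strictMonoOn_Ici.monotoneOn
      (by simp only [Set.mem_Ici]; linarith)
      (by simp only [Set.mem_Ici]; linarith) (by linarith))


lemma step_key (u1 u2 A C Q V R2 N2 R2' N2' lam c : ℝ) (hC : C ≠ 0) (hQ : 0 < Q) (hV : 0 < V)
    (hR2 : 0 ≤ R2) (hN2 : 0 ≤ N2) (hR2' : 0 ≤ R2') (hN2' : 0 ≤ N2')
    (hlam : lam = C * Q / V) (hc : c = (-u1 + A * u2) / lam)
    (hkey : R2 * N2 * V ^ 2 ≤ 2 * (R2' * N2') * Q ^ 2) :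
    c ^ 2 * R2 * N2 ≤ (4 / C ^ 2) * (u1 ^ 2 * R2' * N2') +
      (4 * A ^ 2 / C ^ 2) * (u2 ^ 2 * R2' * N2') := by
  have e1 : c ^ 2 * R2 * N2 = (-u1 + A * u2) ^ 2 *
      ((R2 * N2 * V ^ 2) / (C ^ 2 * Q ^ 2)) := by
    rw [hc, hlam]
    field_simp
  have hu : (-u1 + A * u2) ^ 2 ≤ 2 * u1 ^ 2 + 2 * A ^ 2 * u2 ^ 2 := by
    nlinarith [sq_nonneg (u1 + A * u2)]
  calc c ^ 2 * R2 * N2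
      = (-u1 + A * u2) ^ 2 * ((R2 * N2 * V ^ 2) / (C ^ 2 * Q ^ 2)) := e1
    _ ≤ (2 * u1 ^ 2 + 2 * A ^ 2 * u2 ^ 2) *
        ((2 * (R2' * N2') * Q ^ 2) / (C ^ 2 * Q ^ 2)) := by
        apply mul_le_mul hu ((div_le_div_iff_of_pos_right (by positivity)).mpr hkey)
          (div_nonneg (by positivity) (by positivity)) (by positivity)
    _ = (4 / C ^ 2) * (u1 ^ 2 * R2' * N2') + (4 * A ^ 2 / C ^ 2) * (u2 ^ 2 * R2' * N2') := by
        field_simp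
        ring

/-- regularity transfer from the data to the solution: if the j-th
derivatives of f₁, f₂ lie in the appropriate weighted L² spaces (expressed via
summability of coefficients), then so does the j-th derivative of u/ω^{(α-β,β)}. -/
theorem stmt14 (α β Km KM : ℝ) (hα : 1 < α ∧ α < 2) (hβ : α - 1 < β ∧ β < 1)
    (K f : ℝ → ℝ) (hKmeas : Measurable K) (hKm : 0 < Km)
    (hK : ∀ x ∈ Set.Icc (0:ℝ) 1, Km ≤ K x ∧ K x ≤ KM)
    (hf : Measurable f)
    (hfin : IntervalIntegrable (fun x => jw β (α - β) x * f x ^ 2) MeasureTheory.volume 0 1)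
    (j : ℕ) (hj : 1 ≤ j)
    (h1 : Summable (fun m : ℕ => fCoef α β K f 1 (m + j) ^ 2 *
      (Real.Gamma ((m : ℝ) + (j : ℝ) + (j : ℝ) + α - 1) /
        Real.Gamma ((m : ℝ) + (j : ℝ) + α - 1)) ^ 2 *
      GNormVal m (β + j - 1) (α - β + j - 1) ^ 2))
    (h2 : Summable (fun m : ℕ => fCoef α β K f 2 (m + j) ^ 2 *
      (Real.Gamma ((m : ℝ) + (j : ℝ) + (j : ℝ) + α - 1) /
        Real.Gamma ((m : ℝ) + (j : ℝ) + α - 1)) ^ 2 *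
      GNormVal m (β + j - 1) (α - β + j - 1) ^ 2)) :
    Summable (fun m : ℕ => cCoef α β K f (m + j) ^ 2 *
      (Real.Gamma ((m : ℝ) + (j : ℝ) + (j : ℝ) + α + 1) /
        Real.Gamma ((m : ℝ) + (j : ℝ) + α + 1)) ^ 2 *
      GNormVal m (α - β + j) (β + j) ^ 2) := by
  obtain ⟨hα1, hα2⟩ := hα
  obtain ⟨hβ1, hβ2⟩ := hβ
  set C : ℝ := Real.sin (π * α) / (Real.sin (π * (α - β)) + Real.sin (π * β)) with hCdef
  have hsinα : Real.sin (π * α) < 0 := by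
    rw [show π * α = π * (α - 1) + π by ring, Real.sin_add_pi]
    have : 0 < Real.sin (π * (α - 1)) :=
      Real.sin_pos_of_pos_of_lt_pi (by nlinarith [Real.pi_pos])
        (by nlinarith [Real.pi_pos])
    linarith
  have hden : 0 < Real.sin (π * (α - β)) + Real.sin (π * β) := by
    have hb0 : 0 < β := by linarith
    have h1 : 0 < Real.sin (π * (α - β)) :=
      Real.sin_pos_of_pos_of_lt_pi (by nlinarith [Real.pi_pos]) (by nlinarith [Real.pi_pos])
    have h2 : 0 < Real.sin (π * β) :=
      Real.sin_pos_of_pos_of_lt_pi (by nlinarith [Real.pi_pos]) (by nlinarith [Real.pi_pos])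
    linarith
  have hC : C < 0 := div_neg_of_neg_of_pos hsinα hden
  have hCne : C ≠ 0 := hC.ne
  set A : ℝ := Aconst α β K f with hAdef
  have hlam : ∀ m : ℕ, lamCoef α β (m + j) =
      C * Real.Gamma ((m:ℝ) + (j:ℝ) + α) / Real.Gamma ((m:ℝ) + (j:ℝ) + 1) := by
    intro m
    rw [lamCoef, ← Real.Gamma_nat_eq_factorial]
    push_cast
    ring
  -- shifted summable hypotheses
  have h1' := (summable_nat_add_iff 1).mpr h1
  have h2' := (summable_nat_add_iff 1).mpr h2
  have hsum : Summable (fun m : ℕ =>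
      (4 / C ^ 2) * (fCoef α β K f 1 ((m + 1) + j) ^ 2 *
        (Real.Gamma ((↑(m + 1) : ℝ) + (j : ℝ) + (j : ℝ) + α - 1) /
          Real.Gamma ((↑(m + 1) : ℝ) + (j : ℝ) + α - 1)) ^ 2 *
        GNormVal (m + 1) (β + j - 1) (α - β + j - 1) ^ 2) +
      (4 * A ^ 2 / C ^ 2) * (fCoef α β K f 2 ((m + 1) + j) ^ 2 *
        (Real.Gamma ((↑(m + 1) : ℝ) + (j : ℝ) + (j : ℝ) + α - 1) /
          Real.Gamma ((↑(m + 1) : ℝ) + (j : ℝ) + α - 1)) ^ 2 *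
        GNormVal (m + 1) (β + j - 1) (α - β + j - 1) ^ 2)) :=
    (h1'.mul_left _).add (h2'.mul_left _)
  apply Summable.of_nonneg_of_le (fun m => by positivity) _ hsum
  intro m
  have hM : (0:ℝ) ≤ (m:ℝ) := Nat.cast_nonneg m
  have hJ : (1:ℝ) ≤ (j:ℝ) := by exact_mod_cast hj
  have hQp : 0 < Real.Gamma ((m:ℝ) + (j:ℝ) + α) := Real.Gamma_pos_of_pos (by linarith)
  have hVp : 0 < Real.Gamma ((m:ℝ) + (j:ℝ) + 1) := Real.Gamma_pos_of_pos (by linarith)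
  have hkey : (Real.Gamma ((m : ℝ) + (j : ℝ) + (j : ℝ) + α + 1) /
        Real.Gamma ((m : ℝ) + (j : ℝ) + α + 1)) ^ 2 *
      GNormVal m (α - β + j) (β + j) ^ 2 * Real.Gamma ((m:ℝ) + (j:ℝ) + 1) ^ 2 ≤
      2 * ((Real.Gamma ((↑(m + 1) : ℝ) + (j : ℝ) + (j : ℝ) + α - 1) /
          Real.Gamma ((↑(m + 1) : ℝ) + (j : ℝ) + α - 1)) ^ 2 *
        GNormVal (m + 1) (β + j - 1) (α - β + j - 1) ^ 2) *
      Real.Gamma ((m:ℝ) + (j:ℝ) + α) ^ 2 := by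
    push_cast
    exact key α β hα1 hα2 hβ1 hβ2 m j hj
  have hc : cCoef α β K f (m + j) = (-(fCoef α β K f 1 ((m + 1) + j)) +
      A * fCoef α β K f 2 ((m + 1) + j)) / lamCoef α β (m + j) := by
    rw [show (m + 1) + j = (m + j) + 1 from by omega]
    rfl
  exact step_key _ _ A C _ _ _ _ _ _ _ _ hCne hQp hVp (sq_nonneg _) (sq_nonneg _)
    (sq_nonneg _) (sq_nonneg _) (hlam m) hc hkey
end
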